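/- Let 0 < r < ∞ and let κ_r be the unique number in (0,∞) with lim_{k→∞} (1/k) log Σ_{σ∈Ω_k} (μ_h(J_σ) ‖φ'_σ‖^r)^{κ_r/(r+κ_r)} = 0. Then the κ_r-dimensional upper quantization coefficient of order r of μ_h is finite: limsup_{n→∞} n · V_{n,r}(μ_h)^{κ_r/r} < ∞. -/

import Mathlib

open MeasureTheory Filter Metric

noncomputable section

/-- A cookie-cutter system on `J = [0,1]`. -/
structure CookieCutter where
  N : ℕ
  hN : 2 ≤ N
  Jsub : Fin N → Set ℝ
  f : ℝ → ℝ
  φ : Fin N → ℝ → ℝ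
  c : ℝ
  γ : ℝ
  b : ℝ
  B : ℝ
  hJsub_sub : ∀ j, Jsub j ⊆ Set.Icc 0 1
  hJsub_interval : ∀ j, ∃ u v : ℝ, u ≤ v ∧ Jsub j = Set.Icc u v
  hJsub_disj : ∀ i j, i ≠ j → Disjoint (Jsub i) (Jsub j)
  hbij : ∀ j, Set.BijOn f (Jsub j) (Set.Icc 0 1)
  hφ_maps : ∀ j, ∀ x ∈ Set.Icc (0:ℝ) 1, φ j x ∈ Jsub j
  hφ_rinv : ∀ j, ∀ x ∈ Set.Icc (0:ℝ) 1, f (φ j x) = x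
  hφ_linv : ∀ j, ∀ x ∈ Jsub j, φ j (f x) = x
  hfdiff : ∀ j, ∀ x ∈ Jsub j, DifferentiableAt ℝ f x
  hφdiff : ∀ j, ∀ x ∈ Set.Icc (0:ℝ) 1, DifferentiableAt ℝ (φ j) x
  hc : 0 < c
  hγ : γ ∈ Set.Ioc (0:ℝ) 1
  hHolder : ∀ j, ∀ x ∈ Jsub j, ∀ y ∈ Jsub j, |deriv f x - deriv f y| ≤ c * |x - y| ^ γ
  hb : IsGLB ((fun x => |deriv f x|) '' ⋃ j, Jsub j) b
  hB : IsLUB ((fun x => |deriv f x|) '' ⋃ j, Jsub j) B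
  hb1 : 1 < b

namespace CookieCutter

variable (cc : CookieCutter)

/-- `φ_σ = φ_{σ_1} ∘ ⋯ ∘ φ_{σ_n}` for a word `σ`. -/
def wordMap : List (Fin cc.N) → ℝ → ℝ
  | [] => id
  | j :: rest => cc.φ j ∘ wordMap rest

/-- The basic interval `J_σ = φ_σ(J)`. -/
def Jc (σ : List (Fin cc.N)) : Set ℝ := cc.wordMap σ '' Set.Icc 0 1

/-- The diameter `|J_σ|`. -/
def diamJ (σ : List (Fin cc.N)) : ℝ := Metric.diam (cc.Jc σ)

/-- `‖φ'_σ‖ = sup_{x ∈ J} |φ'_σ(x)|`. -/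
def φnorm (σ : List (Fin cc.N)) : ℝ :=
  sSup ((fun x => |deriv (cc.wordMap σ) x|) '' Set.Icc 0 1)

/-- The distortion constant `ξ = exp (c / (b^γ − 1))`. -/
def xi : ℝ := Real.exp (cc.c / (cc.b ^ cc.γ - 1))

/-- The cookie-cutter set `E = ⋂_{n ≥ 1} ⋃_{σ ∈ Ω_n} J_σ`. -/
def E : Set ℝ := ⋂ (n : ℕ) (_ : 1 ≤ n), ⋃ σ : Fin n → Fin cc.N, cc.Jc (List.ofFn σ)

/-- `η = ξ^{9h}`. -/
def eta (h : ℝ) : ℝ := cc.xi ^ ((9:ℝ) * h)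

/-- `L = η³ ξ^{3h}`. -/
def Lconst (h : ℝ) : ℝ := (cc.eta h) ^ 3 * cc.xi ^ ((3:ℝ) * h)

/-- A Gibbs-like measure for the cookie-cutter system: a Borel probability measure
supported on `E` with `η⁻¹|J_σ|^h ≤ μ(J_σ) ≤ η|J_σ|^h` for every word `σ`. -/
def IsGibbsLike (μ : Measure ℝ) (h : ℝ) : Prop :=
  IsProbabilityMeasure μ ∧ μ (cc.Eᶜ) = 0 ∧
    ∀ σ : List (Fin cc.N), σ ≠ [] →
      (cc.eta h)⁻¹ * cc.diamJ σ ^ h ≤ (μ (cc.Jc σ)).toReal ∧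
      (μ (cc.Jc σ)).toReal ≤ cc.eta h * cc.diamJ σ ^ h

/-- A finite maximal antichain in `Ω`. -/
def IsFMA (Γ : Finset (List (Fin cc.N))) : Prop :=
  (∀ σ ∈ Γ, σ ≠ []) ∧
  (∀ ω : ℕ → Fin cc.N, ∃ k : ℕ, 1 ≤ k ∧ (List.ofFn fun i : Fin k => ω i) ∈ Γ) ∧
  ∀ σ ∈ Γ, ∀ τ ∈ Γ, σ <+: τ → σ = τ

end CookieCutter

/-- The `n`-th quantization error of order `r`. -/
def Vnr (μ : Measure ℝ) (n : ℕ) (r : ℝ) : ℝ :=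
  sInf ((fun α : Finset ℝ => ∫ x, Metric.infDist x (α : Set ℝ) ^ r ∂μ) ''
    {α : Finset ℝ | α.Nonempty ∧ α.card ≤ n})

/-- The auxiliary quantization error `u_{n,r}` with `U = (0,1)`. -/
def unr (μ : Measure ℝ) (n : ℕ) (r : ℝ) : ℝ :=
  sInf ((fun α : Finset ℝ =>
      ∫ x, Metric.infDist x ((α : Set ℝ) ∪ (Set.Ioo (0:ℝ) 1)ᶜ) ^ r ∂μ) ''
    {α : Finset ℝ | α.card ≤ n})


section Aux

open CookieCutter Set

variable (cc : CookieCutter)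

/-- The derivative of `wordMap σ` (valid on `[0,1]`). -/
def Dp : List (Fin cc.N) → ℝ → ℝ
  | [], _ => 1
  | j :: ρ, x => deriv (cc.φ j) (cc.wordMap ρ x) * Dp ρ x

variable {cc}

lemma b_pos : (0:ℝ) < cc.b := lt_trans one_pos cc.hb1

lemma b_le_B : cc.b ≤ cc.B := by
  obtain ⟨u, v, huv, hJ⟩ := cc.hJsub_interval ⟨0, by have := cc.hN; omega⟩
  have hx : u ∈ ⋃ j, cc.Jsub j := Set.mem_iUnion.2 ⟨⟨0, by have := cc.hN; omega⟩, by rw [hJ]; exact ⟨le_refl u, huv⟩⟩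
  exact le_trans (cc.hb.1 ⟨u, hx, rfl⟩) (cc.hB.1 ⟨u, hx, rfl⟩)

lemma B_pos : (0:ℝ) < cc.B := lt_of_lt_of_le b_pos b_le_B

lemma abs_deriv_f_le {x : ℝ} (hx : x ∈ ⋃ j, cc.Jsub j) :
    cc.b ≤ |deriv cc.f x| ∧ |deriv cc.f x| ≤ cc.B :=
  ⟨cc.hb.1 ⟨x, hx, rfl⟩, cc.hB.1 ⟨x, hx, rfl⟩⟩

lemma phi_mem_union (j : Fin cc.N) {x : ℝ} (hx : x ∈ Set.Icc (0:ℝ) 1) :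
    cc.φ j x ∈ ⋃ i, cc.Jsub i :=
  Set.mem_iUnion.2 ⟨j, cc.hφ_maps j x hx⟩

lemma phi_mem_Icc (j : Fin cc.N) {x : ℝ} (hx : x ∈ Set.Icc (0:ℝ) 1) :
    cc.φ j x ∈ Set.Icc (0:ℝ) 1 :=
  cc.hJsub_sub j (cc.hφ_maps j x hx)

lemma deriv_f_phi_mul (j : Fin cc.N) {x : ℝ} (hx : x ∈ Set.Icc (0:ℝ) 1) :
    deriv cc.f (cc.φ j x) * deriv (cc.φ j) x = 1 := by
  have h1 : HasDerivAt (cc.φ j) (deriv (cc.φ j) x) x := (cc.hφdiff j x hx).hasDerivAt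
  have h2 : HasDerivAt cc.f (deriv cc.f (cc.φ j x)) (cc.φ j x) :=
    (cc.hfdiff j _ (cc.hφ_maps j x hx)).hasDerivAt
  have hcomp : HasDerivAt (cc.f ∘ cc.φ j)
      (deriv cc.f (cc.φ j x) * deriv (cc.φ j) x) x := h2.comp x h1
  have hid : HasDerivWithinAt (cc.f ∘ cc.φ j) 1 (Set.Icc (0:ℝ) 1) x := by
    have : HasDerivWithinAt id 1 (Set.Icc (0:ℝ) 1) x := (hasDerivAt_id x).hasDerivWithinAt
    exact this.congr (fun y hy => cc.hφ_rinv j y hy) (cc.hφ_rinv j x hx)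
  have hud : UniqueDiffWithinAt ℝ (Set.Icc (0:ℝ) 1) x := uniqueDiffOn_Icc_zero_one x hx
  have := hcomp.hasDerivWithinAt.derivWithin hud
  rw [← this, hid.derivWithin hud]

lemma deriv_f_phi_ne (j : Fin cc.N) {x : ℝ} (hx : x ∈ Set.Icc (0:ℝ) 1) :
    deriv cc.f (cc.φ j x) ≠ 0 := by
  intro h
  have := deriv_f_phi_mul j hx
  rw [h, zero_mul] at this; exact one_ne_zero this.symm

lemma deriv_phi_eq (j : Fin cc.N) {x : ℝ} (hx : x ∈ Set.Icc (0:ℝ) 1) :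
    deriv (cc.φ j) x = (deriv cc.f (cc.φ j x))⁻¹ :=
  eq_inv_of_mul_eq_one_left (by rw [mul_comm]; exact deriv_f_phi_mul j hx)

lemma abs_deriv_phi_le (j : Fin cc.N) {x : ℝ} (hx : x ∈ Set.Icc (0:ℝ) 1) :
    |deriv (cc.φ j) x| ≤ (cc.b)⁻¹ := by
  rw [deriv_phi_eq j hx, abs_inv]
  exact inv_anti₀ b_pos (abs_deriv_f_le (phi_mem_union j hx)).1

lemma le_abs_deriv_phi (j : Fin cc.N) {x : ℝ} (hx : x ∈ Set.Icc (0:ℝ) 1) :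
    (cc.B)⁻¹ ≤ |deriv (cc.φ j) x| := by
  rw [deriv_phi_eq j hx, abs_inv]
  exact inv_anti₀ (abs_pos.2 (deriv_f_phi_ne j hx)) (abs_deriv_f_le (phi_mem_union j hx)).2

end Aux
section Aux2

open CookieCutter Set

variable {cc : CookieCutter}

lemma wordMap_mem_Icc (σ : List (Fin cc.N)) {x : ℝ} (hx : x ∈ Set.Icc (0:ℝ) 1) :
    cc.wordMap σ x ∈ Set.Icc (0:ℝ) 1 := by
  induction σ with
  | nil => exact hx
  | cons j ρ ih => exact phi_mem_Icc j ih

lemma hasDerivAt_wordMap (σ : List (Fin cc.N)) {x : ℝ} (hx : x ∈ Set.Icc (0:ℝ) 1) :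
    HasDerivAt (cc.wordMap σ) (Dp cc σ x) x := by
  induction σ with
  | nil => exact hasDerivAt_id x
  | cons j ρ ih =>
    have h1 : HasDerivAt (cc.φ j) (deriv (cc.φ j) (cc.wordMap ρ x)) (cc.wordMap ρ x) :=
      (cc.hφdiff j _ (wordMap_mem_Icc ρ hx)).hasDerivAt
    exact h1.comp x ih

lemma deriv_wordMap (σ : List (Fin cc.N)) {x : ℝ} (hx : x ∈ Set.Icc (0:ℝ) 1) :
    deriv (cc.wordMap σ) x = Dp cc σ x := (hasDerivAt_wordMap σ hx).deriv

lemma Dp_bounds (σ : List (Fin cc.N)) {x : ℝ} (hx : x ∈ Set.Icc (0:ℝ) 1) :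
    ((cc.B)⁻¹) ^ σ.length ≤ |Dp cc σ x| ∧ |Dp cc σ x| ≤ ((cc.b)⁻¹) ^ σ.length := by
  induction σ with
  | nil => simp [Dp]
  | cons j ρ ih =>
    have h1 := abs_deriv_phi_le j (wordMap_mem_Icc ρ hx)
    have h2 := le_abs_deriv_phi j (wordMap_mem_Icc ρ hx)
    have hB : (0:ℝ) < (cc.B)⁻¹ := inv_pos.2 B_pos
    constructor
    · calc ((cc.B)⁻¹) ^ (j :: ρ).length = (cc.B)⁻¹ * ((cc.B)⁻¹) ^ ρ.length := by
            simp [pow_succ, mul_comm]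
      _ ≤ |deriv (cc.φ j) (cc.wordMap ρ x)| * |Dp cc ρ x| :=
            mul_le_mul h2 ih.1 (pow_nonneg (inv_nonneg.2 B_pos.le) _) (abs_nonneg _)
      _ = |Dp cc (j :: ρ) x| := (abs_mul _ _).symm
    · calc |Dp cc (j :: ρ) x| = |deriv (cc.φ j) (cc.wordMap ρ x)| * |Dp cc ρ x| := abs_mul _ _
      _ ≤ (cc.b)⁻¹ * ((cc.b)⁻¹) ^ ρ.length :=
            mul_le_mul h1 ih.2 (abs_nonneg _) (inv_nonneg.2 b_pos.le)
      _ = ((cc.b)⁻¹) ^ (j :: ρ).length := by simp [pow_succ, mul_comm]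

lemma Dp_pos (σ : List (Fin cc.N)) {x : ℝ} (hx : x ∈ Set.Icc (0:ℝ) 1) :
    0 < |Dp cc σ x| :=
  lt_of_lt_of_le (pow_pos (inv_pos.2 B_pos) _) (Dp_bounds σ hx).1

lemma binv_pow_le_one (n : ℕ) : ((cc.b)⁻¹) ^ n ≤ (1:ℝ) :=
  pow_le_one₀ (inv_nonneg.2 b_pos.le) (inv_le_one_of_one_le₀ cc.hb1.le)

lemma wordMap_lipschitz (σ : List (Fin cc.N)) {x y : ℝ} (hx : x ∈ Set.Icc (0:ℝ) 1)
    (hy : y ∈ Set.Icc (0:ℝ) 1) :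
    |cc.wordMap σ x - cc.wordMap σ y| ≤ ((cc.b)⁻¹) ^ σ.length * |x - y| := by
  have := Convex.norm_image_sub_le_of_norm_hasDerivWithin_le
    (f := cc.wordMap σ) (f' := Dp cc σ) (s := Set.Icc (0:ℝ) 1)
    (C := ((cc.b)⁻¹) ^ σ.length)
    (fun z hz => (hasDerivAt_wordMap σ hz).hasDerivWithinAt)
    (fun z hz => by simpa [Real.norm_eq_abs] using (Dp_bounds σ hz).2)
    (convex_Icc 0 1) hy hx
  simpa [Real.norm_eq_abs] using this

lemma dist_le_one {x y : ℝ} (hx : x ∈ Set.Icc (0:ℝ) 1) (hy : y ∈ Set.Icc (0:ℝ) 1) :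
    |x - y| ≤ 1 := by
  rw [abs_sub_le_iff]; constructor <;> [skip; skip] <;> nlinarith [hx.1, hx.2, hy.1, hy.2]

end Aux2
section Aux3

open CookieCutter Set

variable {cc : CookieCutter}

lemma one_lt_bγ : 1 < cc.b ^ cc.γ :=
  (Real.one_lt_rpow_iff_of_pos b_pos).2 (Or.inl ⟨cc.hb1, cc.hγ.1⟩)

lemma binv_pow_rpow (m : ℕ) :
    ((cc.b)⁻¹ ^ m) ^ cc.γ = ((cc.b ^ cc.γ)⁻¹) ^ m := by
  have h1 : ((cc.b)⁻¹ ^ m) ^ cc.γ = (cc.b)⁻¹ ^ ((m : ℝ) * cc.γ) := by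
    rw [← Real.rpow_natCast (cc.b)⁻¹ m, ← Real.rpow_mul (inv_nonneg.2 b_pos.le)]
  have h2 : ((cc.b ^ cc.γ)⁻¹) ^ m = (cc.b)⁻¹ ^ (cc.γ * (m : ℝ)) := by
    rw [← Real.inv_rpow b_pos.le, ← Real.rpow_natCast ((cc.b)⁻¹ ^ cc.γ) m,
      ← Real.rpow_mul (inv_nonneg.2 b_pos.le)]
  rw [h1, h2, mul_comm]

lemma log_Dp_sub (σ : List (Fin cc.N)) {x y : ℝ} (hx : x ∈ Set.Icc (0:ℝ) 1)
    (hy : y ∈ Set.Icc (0:ℝ) 1) :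
    Real.log |Dp cc σ x| - Real.log |Dp cc σ y|
      ≤ cc.c / (cc.b ^ cc.γ - 1) * (1 - ((cc.b ^ cc.γ)⁻¹) ^ σ.length) := by
  have hbγ : 1 < cc.b ^ cc.γ := one_lt_bγ
  set q : ℝ := (cc.b ^ cc.γ)⁻¹ with hqdef
  set M : ℝ := cc.c / (cc.b ^ cc.γ - 1) with hMdef
  have hq0 : 0 < q := inv_pos.2 (lt_trans one_pos hbγ)
  have hM0 : 0 < M := div_pos cc.hc (by linarith)
  have hMq : M * (1 - q) = cc.c * q := by
    rw [hMdef, hqdef]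
    have h1 : cc.b ^ cc.γ ≠ 0 := by positivity
    have h2 : cc.b ^ cc.γ - 1 ≠ 0 := by intro h; rw [sub_eq_zero] at h; exact absurd h.symm (ne_of_lt hbγ)
    field_simp
  induction σ with
  | nil => simp [Dp]
  | cons j ρ ih =>
    have hu : cc.wordMap ρ x ∈ Set.Icc (0:ℝ) 1 := wordMap_mem_Icc ρ hx
    have hv : cc.wordMap ρ y ∈ Set.Icc (0:ℝ) 1 := wordMap_mem_Icc ρ hy
    have hdφu : 0 < |deriv (cc.φ j) (cc.wordMap ρ x)| :=
      lt_of_lt_of_le (inv_pos.2 B_pos) (le_abs_deriv_phi j hu)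
    have hdφv : 0 < |deriv (cc.φ j) (cc.wordMap ρ y)| :=
      lt_of_lt_of_le (inv_pos.2 B_pos) (le_abs_deriv_phi j hv)
    have e1 : Real.log |Dp cc (j :: ρ) x|
        = Real.log |deriv (cc.φ j) (cc.wordMap ρ x)| + Real.log |Dp cc ρ x| := by
      rw [show Dp cc (j :: ρ) x = deriv (cc.φ j) (cc.wordMap ρ x) * Dp cc ρ x from rfl,
        abs_mul, Real.log_mul (ne_of_gt hdφu) (ne_of_gt (Dp_pos ρ hx))]
    have e2 : Real.log |Dp cc (j :: ρ) y|
        = Real.log |deriv (cc.φ j) (cc.wordMap ρ y)| + Real.log |Dp cc ρ y| := by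
      rw [show Dp cc (j :: ρ) y = deriv (cc.φ j) (cc.wordMap ρ y) * Dp cc ρ y from rfl,
        abs_mul, Real.log_mul (ne_of_gt hdφv) (ne_of_gt (Dp_pos ρ hy))]
    -- the one-step distortion estimate
    have t1 : Real.log |deriv (cc.φ j) (cc.wordMap ρ x)|
        - Real.log |deriv (cc.φ j) (cc.wordMap ρ y)|
        ≤ cc.c * q ^ (ρ.length + 1) / cc.b := by
      rw [deriv_phi_eq j hu, deriv_phi_eq j hv, abs_inv, abs_inv, Real.log_inv, Real.log_inv]
      set U : ℝ := |deriv cc.f (cc.φ j (cc.wordMap ρ y))| with hUdef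
      set V : ℝ := |deriv cc.f (cc.φ j (cc.wordMap ρ x))| with hVdef
      have hUb : cc.b ≤ U := (abs_deriv_f_le (phi_mem_union j hv)).1
      have hVb : cc.b ≤ V := (abs_deriv_f_le (phi_mem_union j hu)).1
      have hU0 : 0 < U := lt_of_lt_of_le b_pos hUb
      have hV0 : 0 < V := lt_of_lt_of_le b_pos hVb
      have hUV : |U - V| ≤ cc.c * |cc.φ j (cc.wordMap ρ y) - cc.φ j (cc.wordMap ρ x)| ^ cc.γ :=
        (abs_abs_sub_abs_le_abs_sub _ _).trans
          (cc.hHolder j _ (cc.hφ_maps j _ hv) _ (cc.hφ_maps j _ hu))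
      have hφd : |cc.φ j (cc.wordMap ρ y) - cc.φ j (cc.wordMap ρ x)|
          ≤ (cc.b)⁻¹ ^ (ρ.length + 1) := by
        have l1 : |cc.φ j (cc.wordMap ρ y) - cc.φ j (cc.wordMap ρ x)|
            ≤ (cc.b)⁻¹ ^ 1 * |cc.wordMap ρ y - cc.wordMap ρ x| :=
          wordMap_lipschitz [j] hv hu
        have l2 : |cc.wordMap ρ y - cc.wordMap ρ x| ≤ (cc.b)⁻¹ ^ ρ.length * |y - x| :=
          wordMap_lipschitz ρ hy hx
        have l3 : |y - x| ≤ 1 := dist_le_one hy hx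
        have hbinv : (0:ℝ) ≤ (cc.b)⁻¹ := inv_nonneg.2 b_pos.le
        calc |cc.φ j (cc.wordMap ρ y) - cc.φ j (cc.wordMap ρ x)|
            ≤ (cc.b)⁻¹ ^ 1 * ((cc.b)⁻¹ ^ ρ.length * |y - x|) :=
              l1.trans (mul_le_mul_of_nonneg_left l2 (pow_nonneg hbinv 1))
          _ ≤ (cc.b)⁻¹ ^ 1 * ((cc.b)⁻¹ ^ ρ.length * 1) := by
              apply mul_le_mul_of_nonneg_left _ (pow_nonneg hbinv 1)
              exact mul_le_mul_of_nonneg_left l3 (pow_nonneg hbinv _)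
          _ = (cc.b)⁻¹ ^ (ρ.length + 1) := by ring
      have hφγ : |cc.φ j (cc.wordMap ρ y) - cc.φ j (cc.wordMap ρ x)| ^ cc.γ
          ≤ q ^ (ρ.length + 1) := by
        calc |cc.φ j (cc.wordMap ρ y) - cc.φ j (cc.wordMap ρ x)| ^ cc.γ
            ≤ ((cc.b)⁻¹ ^ (ρ.length + 1)) ^ cc.γ :=
              Real.rpow_le_rpow (abs_nonneg _) hφd cc.hγ.1.le
          _ = q ^ (ρ.length + 1) := binv_pow_rpow _
      have goalEq : -Real.log V - -Real.log U = Real.log U - Real.log V := by ring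
      rw [goalEq]
      calc Real.log U - Real.log V = Real.log (U / V) :=
            (Real.log_div (ne_of_gt hU0) (ne_of_gt hV0)).symm
        _ ≤ U / V - 1 := Real.log_le_sub_one_of_pos (div_pos hU0 hV0)
        _ = (U - V) / V := by field_simp
        _ ≤ |U - V| / V := (div_le_div_iff_of_pos_right hV0).2 (le_abs_self _)
        _ ≤ cc.c * |cc.φ j (cc.wordMap ρ y) - cc.φ j (cc.wordMap ρ x)| ^ cc.γ / cc.b :=
            div_le_div₀ (mul_nonneg cc.hc.le (Real.rpow_nonneg (abs_nonneg _) _)) hUV b_pos hVb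
        _ ≤ cc.c * q ^ (ρ.length + 1) / cc.b :=
            (div_le_div_iff_of_pos_right b_pos).2 (mul_le_mul_of_nonneg_left hφγ cc.hc.le)
    have hstep : cc.c * q ^ (ρ.length + 1) / cc.b + M * (1 - q ^ ρ.length)
        ≤ M * (1 - q ^ (ρ.length + 1)) := by
      have h1 : cc.c * q ^ (ρ.length + 1) / cc.b ≤ cc.c * q ^ (ρ.length + 1) :=
        div_le_self (mul_nonneg cc.hc.le (pow_nonneg hq0.le _)) cc.hb1.le
      have h2 : M * (1 - q ^ (ρ.length + 1)) - M * (1 - q ^ ρ.length)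
          = cc.c * q ^ (ρ.length + 1) := by
        calc M * (1 - q ^ (ρ.length + 1)) - M * (1 - q ^ ρ.length)
            = (M * (1 - q)) * q ^ ρ.length := by ring
          _ = cc.c * q * q ^ ρ.length := by rw [hMq]
          _ = cc.c * q ^ (ρ.length + 1) := by ring
      linarith
    have := ih
    rw [e1, e2]
    have len : (j :: ρ).length = ρ.length + 1 := rfl
    rw [len]
    linarith

end Aux3
section Aux4

open CookieCutter Set

variable {cc : CookieCutter}

lemma xi_pos : 0 < cc.xi := Real.exp_pos _

lemma one_le_xi : 1 ≤ cc.xi := by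
  have hbγ := one_lt_bγ (cc := cc)
  have h : (0:ℝ) ≤ cc.c / (cc.b ^ cc.γ - 1) := (div_pos cc.hc (by linarith)).le
  have := Real.exp_le_exp.2 h
  rw [Real.exp_zero] at this
  exact this

lemma Dp_ratio (σ : List (Fin cc.N)) {x y : ℝ} (hx : x ∈ Set.Icc (0:ℝ) 1)
    (hy : y ∈ Set.Icc (0:ℝ) 1) : |Dp cc σ x| ≤ cc.xi * |Dp cc σ y| := by
  have h := log_Dp_sub σ hx hy
  have hbγ : 1 < cc.b ^ cc.γ := one_lt_bγ
  have hM0 : 0 < cc.c / (cc.b ^ cc.γ - 1) := div_pos cc.hc (by linarith)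
  have hq : (0:ℝ) ≤ ((cc.b ^ cc.γ)⁻¹) ^ σ.length :=
    pow_nonneg (inv_nonneg.2 (by linarith)) _
  have h2 : Real.log |Dp cc σ x| - Real.log |Dp cc σ y| ≤ cc.c / (cc.b ^ cc.γ - 1) := by
    refine h.trans ?_
    nlinarith
  calc |Dp cc σ x| = Real.exp (Real.log |Dp cc σ x|) := (Real.exp_log (Dp_pos σ hx)).symm
    _ ≤ Real.exp (cc.c / (cc.b ^ cc.γ - 1) + Real.log |Dp cc σ y|) :=
        Real.exp_le_exp.2 (by linarith)
    _ = cc.xi * |Dp cc σ y| := by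
        rw [Real.exp_add, Real.exp_log (Dp_pos σ hy), CookieCutter.xi]

lemma phnorm_bddAbove (σ : List (Fin cc.N)) :
    BddAbove ((fun x => |deriv (cc.wordMap σ) x|) '' Set.Icc 0 1) := by
  refine ⟨((cc.b)⁻¹) ^ σ.length, ?_⟩
  rintro z ⟨x, hx, rfl⟩
  show |deriv (cc.wordMap σ) x| ≤ _
  rw [deriv_wordMap σ hx]
  exact (Dp_bounds σ hx).2

lemma phnorm_nonempty (σ : List (Fin cc.N)) :
    ((fun x => |deriv (cc.wordMap σ) x|) '' Set.Icc 0 1).Nonempty :=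
  ⟨_, ⟨0, by norm_num, rfl⟩⟩

lemma le_phnorm (σ : List (Fin cc.N)) {x : ℝ} (hx : x ∈ Set.Icc (0:ℝ) 1) :
    |Dp cc σ x| ≤ cc.φnorm σ := by
  rw [← deriv_wordMap σ hx]
  exact le_csSup (phnorm_bddAbove σ) ⟨x, hx, rfl⟩

lemma phnorm_le_pow (σ : List (Fin cc.N)) : cc.φnorm σ ≤ ((cc.b)⁻¹) ^ σ.length := by
  apply csSup_le (phnorm_nonempty σ)
  rintro z ⟨x, hx, rfl⟩
  show |deriv (cc.wordMap σ) x| ≤ _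
  rw [deriv_wordMap σ hx]
  exact (Dp_bounds σ hx).2

lemma phnorm_le_one (σ : List (Fin cc.N)) : cc.φnorm σ ≤ 1 :=
  (phnorm_le_pow σ).trans (binv_pow_le_one _)

lemma phnorm_pos (σ : List (Fin cc.N)) : 0 < cc.φnorm σ :=
  lt_of_lt_of_le (Dp_pos σ (by norm_num : (0:ℝ) ∈ Set.Icc (0:ℝ) 1)) (le_phnorm σ (by norm_num))

lemma phnorm_le_xi_mul (σ : List (Fin cc.N)) {x : ℝ} (hx : x ∈ Set.Icc (0:ℝ) 1) :
    cc.φnorm σ ≤ cc.xi * |Dp cc σ x| := by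
  apply csSup_le (phnorm_nonempty σ)
  rintro z ⟨y, hy, rfl⟩
  show |deriv (cc.wordMap σ) y| ≤ _
  rw [deriv_wordMap σ hy]
  exact Dp_ratio σ hy hx

lemma wordMap_append (σ τ : List (Fin cc.N)) :
    cc.wordMap (σ ++ τ) = cc.wordMap σ ∘ cc.wordMap τ := by
  induction σ with
  | nil => rfl
  | cons j ρ ih =>
    funext x
    simp only [List.cons_append, CookieCutter.wordMap, Function.comp_apply]
    exact congrArg (cc.φ j) (congrFun ih x)

lemma Dp_append (σ τ : List (Fin cc.N)) (x : ℝ) :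
    Dp cc (σ ++ τ) x = Dp cc σ (cc.wordMap τ x) * Dp cc τ x := by
  induction σ with
  | nil => simp [Dp]
  | cons j ρ ih =>
    show deriv (cc.φ j) (cc.wordMap (ρ ++ τ) x) * Dp cc (ρ ++ τ) x = _
    rw [ih, wordMap_append]
    show deriv (cc.φ j) (cc.wordMap ρ (cc.wordMap τ x)) * _ = _
    rw [show Dp cc (j :: ρ) (cc.wordMap τ x)
      = deriv (cc.φ j) (cc.wordMap ρ (cc.wordMap τ x)) * Dp cc ρ (cc.wordMap τ x) from rfl]
    ring

lemma phnorm_append_le (σ τ : List (Fin cc.N)) :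
    cc.φnorm (σ ++ τ) ≤ cc.φnorm σ * cc.φnorm τ := by
  apply csSup_le (phnorm_nonempty _)
  rintro z ⟨x, hx, rfl⟩
  show |deriv (cc.wordMap (σ ++ τ)) x| ≤ _
  rw [deriv_wordMap _ hx, Dp_append, abs_mul]
  exact mul_le_mul (le_phnorm σ (wordMap_mem_Icc τ hx)) (le_phnorm τ hx)
    (abs_nonneg _) (phnorm_pos σ).le

lemma phnorm_append_ge (σ τ : List (Fin cc.N)) :
    cc.φnorm σ * cc.φnorm τ ≤ cc.xi ^ 2 * cc.φnorm (σ ++ τ) := by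
  have h0 : (0:ℝ) ∈ Set.Icc (0:ℝ) 1 := by norm_num
  have h1 : cc.φnorm σ ≤ cc.xi * |Dp cc σ (cc.wordMap τ 0)| :=
    phnorm_le_xi_mul σ (wordMap_mem_Icc τ h0)
  have h2 : cc.φnorm τ ≤ cc.xi * |Dp cc τ 0| := phnorm_le_xi_mul τ h0
  calc cc.φnorm σ * cc.φnorm τ
      ≤ (cc.xi * |Dp cc σ (cc.wordMap τ 0)|) * (cc.xi * |Dp cc τ 0|) :=
        mul_le_mul h1 h2 (phnorm_pos τ).le (mul_nonneg xi_pos.le (abs_nonneg _))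
    _ = cc.xi ^ 2 * |Dp cc (σ ++ τ) 0| := by rw [Dp_append, abs_mul]; ring
    _ ≤ cc.xi ^ 2 * cc.φnorm (σ ++ τ) :=
        mul_le_mul_of_nonneg_left (le_phnorm _ h0) (pow_nonneg xi_pos.le 2)

lemma Jc_subset_Icc (σ : List (Fin cc.N)) : cc.Jc σ ⊆ Set.Icc 0 1 := by
  rintro z ⟨x, hx, rfl⟩
  exact wordMap_mem_Icc σ hx

lemma isCompact_Jc (σ : List (Fin cc.N)) : IsCompact (cc.Jc σ) := by
  apply (isCompact_Icc (a := (0:ℝ)) (b := 1)).image_of_continuousOn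
  intro x hx
  exact (hasDerivAt_wordMap σ hx).continuousAt.continuousWithinAt

lemma measurableSet_Jc (σ : List (Fin cc.N)) : MeasurableSet (cc.Jc σ) :=
  (isCompact_Jc σ).isClosed.measurableSet

lemma diam_le_phnorm (σ : List (Fin cc.N)) : cc.diamJ σ ≤ cc.φnorm σ := by
  apply Metric.diam_le_of_forall_dist_le (phnorm_pos σ).le
  rintro z ⟨x, hx, rfl⟩ w ⟨y, hy, rfl⟩
  have := Convex.norm_image_sub_le_of_norm_hasDerivWithin_le
    (f := cc.wordMap σ) (f' := Dp cc σ) (s := Set.Icc (0:ℝ) 1) (C := cc.φnorm σ)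
    (fun z hz => (hasDerivAt_wordMap σ hz).hasDerivWithinAt)
    (fun z hz => by simpa [Real.norm_eq_abs] using le_phnorm σ hz)
    (convex_Icc 0 1) hy hx
  rw [Real.dist_eq]
  calc |cc.wordMap σ x - cc.wordMap σ y| ≤ cc.φnorm σ * |x - y| := by
        simpa [Real.norm_eq_abs] using this
    _ ≤ cc.φnorm σ * 1 := mul_le_mul_of_nonneg_left (dist_le_one hx hy) (phnorm_pos σ).le
    _ = cc.φnorm σ := mul_one _

lemma xi_inv_phnorm_le_diam (σ : List (Fin cc.N)) : (cc.xi)⁻¹ * cc.φnorm σ ≤ cc.diamJ σ := by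
  obtain ⟨ζ, hζ, hslope⟩ := exists_hasDerivAt_eq_slope (cc.wordMap σ) (Dp cc σ)
    (zero_lt_one) (fun z hz => (hasDerivAt_wordMap σ hz).continuousAt.continuousWithinAt)
    (fun z hz => hasDerivAt_wordMap σ (Set.mem_Icc_of_Ioo hz))
  have hζI : ζ ∈ Set.Icc (0:ℝ) 1 := Set.mem_Icc_of_Ioo hζ
  have h1 : cc.φnorm σ ≤ cc.xi * |Dp cc σ ζ| := phnorm_le_xi_mul σ hζI
  have h2 : |Dp cc σ ζ| = |cc.wordMap σ 1 - cc.wordMap σ 0| := by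
    rw [hslope]; norm_num
  have h3 : |cc.wordMap σ 1 - cc.wordMap σ 0| ≤ cc.diamJ σ := by
    rw [← Real.dist_eq]
    exact Metric.dist_le_diam_of_mem (isCompact_Jc σ).isBounded
      ⟨1, by norm_num, rfl⟩ ⟨0, by norm_num, rfl⟩
  rw [inv_mul_le_iff₀ (lt_of_lt_of_le one_pos one_le_xi)]
  calc cc.φnorm σ ≤ cc.xi * |Dp cc σ ζ| := h1
    _ = cc.xi * |cc.wordMap σ 1 - cc.wordMap σ 0| := by rw [h2]
    _ ≤ cc.xi * cc.diamJ σ := mul_le_mul_of_nonneg_left h3 (xi_pos).le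
  
lemma diam_pos (σ : List (Fin cc.N)) : 0 < cc.diamJ σ :=
  lt_of_lt_of_le (mul_pos (inv_pos.2 xi_pos) (phnorm_pos σ)) (xi_inv_phnorm_le_diam σ)

lemma diam_nonneg (σ : List (Fin cc.N)) : 0 ≤ cc.diamJ σ := (diam_pos σ).le

end Aux4
section Aux5

open CookieCutter Set

variable {cc : CookieCutter}

lemma pow_rpow_comm {x : ℝ} (hx : 0 ≤ x) (n : ℕ) (t : ℝ) :
    ((x ^ n) ^ t : ℝ) = (x ^ t) ^ n := by
  rw [← Real.rpow_natCast x n, ← Real.rpow_mul hx, ← Real.rpow_natCast (x ^ t) n,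
    ← Real.rpow_mul hx, mul_comm]

lemma one_le_xi_rpow {t : ℝ} (ht : 0 ≤ t) : 1 ≤ cc.xi ^ t := by
  have := Real.rpow_le_rpow_of_exponent_le (one_le_xi (cc := cc)) ht
  rwa [Real.rpow_zero] at this

lemma xi_rpow_pos (t : ℝ) : 0 < cc.xi ^ t := Real.rpow_pos_of_pos xi_pos t

lemma eta_pos {h : ℝ} : 0 < cc.eta h := Real.rpow_pos_of_pos xi_pos _

lemma one_le_eta {h : ℝ} (hh : 0 ≤ h) : 1 ≤ cc.eta h :=
  one_le_xi_rpow (by linarith)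

/-- The basic quantity `a_σ = μ(J_σ) ‖φ'_σ‖^r`. -/
def aR (cc : CookieCutter) (μ : MeasureTheory.Measure ℝ) (r : ℝ) (σ : List (Fin cc.N)) : ℝ :=
  (μ (cc.Jc σ)).toReal * cc.φnorm σ ^ r

section Gibbs

variable {μ : MeasureTheory.Measure ℝ} {h r : ℝ}

lemma mu_Jc_le_one (hμ : cc.IsGibbsLike μ h) (σ : List (Fin cc.N)) :
    (μ (cc.Jc σ)).toReal ≤ 1 := by
  haveI := hμ.1
  have h1 : μ (cc.Jc σ) ≤ 1 := prob_le_one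
  have := ENNReal.toReal_mono ENNReal.one_ne_top h1
  simpa using this

lemma mu_Jc_nonneg (σ : List (Fin cc.N)) : 0 ≤ (μ (cc.Jc σ)).toReal := ENNReal.toReal_nonneg

lemma gibbs_low (hμ : cc.IsGibbsLike μ h) (hh0 : 0 < h) {σ : List (Fin cc.N)} (hσ : σ ≠ []) :
    (cc.eta h)⁻¹ * ((cc.xi ^ h)⁻¹ * cc.φnorm σ ^ h) ≤ (μ (cc.Jc σ)).toReal := by
  refine le_trans ?_ ((hμ.2.2 σ hσ).1)
  apply mul_le_mul_of_nonneg_left _ (inv_nonneg.2 eta_pos.le)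
  have h1 : (cc.xi)⁻¹ * cc.φnorm σ ≤ cc.diamJ σ := xi_inv_phnorm_le_diam σ
  have h2 : ((cc.xi)⁻¹ * cc.φnorm σ) ^ h ≤ cc.diamJ σ ^ h :=
    Real.rpow_le_rpow (mul_nonneg (inv_nonneg.2 xi_pos.le) (phnorm_pos σ).le) h1 hh0.le
  calc (cc.xi ^ h)⁻¹ * cc.φnorm σ ^ h = ((cc.xi)⁻¹) ^ h * cc.φnorm σ ^ h := by
        rw [Real.inv_rpow xi_pos.le]
    _ = ((cc.xi)⁻¹ * cc.φnorm σ) ^ h :=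
        (Real.mul_rpow (inv_nonneg.2 xi_pos.le) (phnorm_pos σ).le).symm
    _ ≤ cc.diamJ σ ^ h := h2

lemma gibbs_up (hμ : cc.IsGibbsLike μ h) (hh0 : 0 < h) {σ : List (Fin cc.N)} (hσ : σ ≠ []) :
    (μ (cc.Jc σ)).toReal ≤ cc.eta h * cc.φnorm σ ^ h := by
  refine le_trans ((hμ.2.2 σ hσ).2) ?_
  apply mul_le_mul_of_nonneg_left _ eta_pos.le
  exact Real.rpow_le_rpow (diam_nonneg σ) (diam_le_phnorm σ) hh0.le

lemma mu_Jc_pos (hμ : cc.IsGibbsLike μ h) (hh0 : 0 < h) {σ : List (Fin cc.N)} (hσ : σ ≠ []) :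
    0 < (μ (cc.Jc σ)).toReal :=
  lt_of_lt_of_le
    (mul_pos (inv_pos.2 eta_pos)
      (mul_pos (inv_pos.2 (xi_rpow_pos h)) (Real.rpow_pos_of_pos (phnorm_pos σ) h)))
    (gibbs_low hμ hh0 hσ)

lemma phnorm_mul_rpow_le (hμ : cc.IsGibbsLike μ h) (hh0 : 0 < h) {σ : List (Fin cc.N)}
    (hσ : σ ≠ []) : cc.φnorm σ ^ h ≤ cc.xi ^ h * (cc.eta h * (μ (cc.Jc σ)).toReal) := by
  have h1 := gibbs_low hμ hh0 hσ
  rw [inv_mul_le_iff₀ (eta_pos (cc := cc) (h := h))] at h1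
  rw [inv_mul_le_iff₀ (xi_rpow_pos (cc := cc) h)] at h1
  exact h1

/-- The submultiplicativity constant. -/
def K0c (cc : CookieCutter) (h r : ℝ) : ℝ :=
  cc.eta h ^ 3 * (cc.xi ^ h) ^ 3 * (cc.xi ^ r) ^ 2

lemma one_le_K0 (hh0 : 0 < h) (hr : 0 < r) : 1 ≤ K0c cc h r := by
  have e1 : (1:ℝ) ≤ cc.eta h ^ 3 := one_le_pow₀ (one_le_eta hh0.le)
  have e2 : (1:ℝ) ≤ (cc.xi ^ h) ^ 3 := one_le_pow₀ (one_le_xi_rpow hh0.le)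
  have e3 : (1:ℝ) ≤ (cc.xi ^ r) ^ 2 := one_le_pow₀ (one_le_xi_rpow hr.le)
  calc (1:ℝ) = 1 * 1 * 1 := by norm_num
    _ ≤ cc.eta h ^ 3 * (cc.xi ^ h) ^ 3 * (cc.xi ^ r) ^ 2 := by
        apply mul_le_mul (mul_le_mul e1 e2 one_pos.le (by linarith)) e3 one_pos.le
        exact mul_nonneg (pow_nonneg (eta_pos (cc := cc) (h := h)).le 3)
          (pow_nonneg (xi_rpow_pos (cc := cc) h).le 3)

lemma K0_pos (hh0 : 0 < h) (hr : 0 < r) : 0 < K0c cc h r :=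
  lt_of_lt_of_le one_pos (one_le_K0 hh0 hr)

lemma aR_nonneg (σ : List (Fin cc.N)) : 0 ≤ aR cc μ r σ :=
  mul_nonneg ENNReal.toReal_nonneg (Real.rpow_nonneg (phnorm_pos σ).le r)

lemma aR_pos (hμ : cc.IsGibbsLike μ h) (hh0 : 0 < h) {σ : List (Fin cc.N)} (hσ : σ ≠ []) :
    0 < aR cc μ r σ :=
  mul_pos (mu_Jc_pos hμ hh0 hσ) (Real.rpow_pos_of_pos (phnorm_pos σ) r)

lemma aR_le (hμ : cc.IsGibbsLike μ h) (hr : 0 < r) (σ : List (Fin cc.N)) :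
    aR cc μ r σ ≤ ((cc.b)⁻¹ ^ σ.length) ^ r := by
  calc aR cc μ r σ ≤ 1 * cc.φnorm σ ^ r :=
        mul_le_mul_of_nonneg_right (mu_Jc_le_one hμ σ) (Real.rpow_nonneg (phnorm_pos σ).le r)
    _ = cc.φnorm σ ^ r := one_mul _
    _ ≤ ((cc.b)⁻¹ ^ σ.length) ^ r :=
        Real.rpow_le_rpow (phnorm_pos σ).le (phnorm_le_pow σ) hr.le

lemma aR_submult (hμ : cc.IsGibbsLike μ h) (hh0 : 0 < h) (hr : 0 < r)
    {σ τ : List (Fin cc.N)} (hσ : σ ≠ []) (hτ : τ ≠ []) :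
    aR cc μ r (σ ++ τ) ≤ K0c cc h r * (aR cc μ r σ * aR cc μ r τ) := by
  have hφσ := phnorm_pos σ; have hφτ := phnorm_pos τ; have hφστ := phnorm_pos (σ ++ τ)
  have happ : σ ++ τ ≠ [] := fun hc => hσ (List.append_eq_nil_iff.1 hc).1
  have hη := eta_pos (cc := cc) (h := h)
  -- bound on the measure factor
  have hm : (μ (cc.Jc (σ ++ τ))).toReal
      ≤ cc.eta h ^ 3 * (cc.xi ^ h) ^ 2 * ((μ (cc.Jc σ)).toReal * (μ (cc.Jc τ)).toReal) := by
    calc (μ (cc.Jc (σ ++ τ))).toReal ≤ cc.eta h * cc.φnorm (σ ++ τ) ^ h := gibbs_up hμ hh0 happ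
      _ ≤ cc.eta h * (cc.φnorm σ * cc.φnorm τ) ^ h := by
          apply mul_le_mul_of_nonneg_left _ hη.le
          exact Real.rpow_le_rpow hφστ.le (phnorm_append_le σ τ) hh0.le
      _ = cc.eta h * (cc.φnorm σ ^ h * cc.φnorm τ ^ h) := by
          rw [Real.mul_rpow hφσ.le hφτ.le]
      _ ≤ cc.eta h * ((cc.xi ^ h * (cc.eta h * (μ (cc.Jc σ)).toReal))
            * (cc.xi ^ h * (cc.eta h * (μ (cc.Jc τ)).toReal))) := by
          apply mul_le_mul_of_nonneg_left _ hη.le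
          exact mul_le_mul (phnorm_mul_rpow_le hμ hh0 hσ) (phnorm_mul_rpow_le hμ hh0 hτ)
            (Real.rpow_nonneg hφτ.le h)
            (mul_nonneg (xi_rpow_pos h).le (mul_nonneg hη.le ENNReal.toReal_nonneg))
      _ = cc.eta h ^ 3 * (cc.xi ^ h) ^ 2 * ((μ (cc.Jc σ)).toReal * (μ (cc.Jc τ)).toReal) := by
          ring
  have hφ : cc.φnorm (σ ++ τ) ^ r ≤ cc.φnorm σ ^ r * cc.φnorm τ ^ r := by
    calc cc.φnorm (σ ++ τ) ^ r ≤ (cc.φnorm σ * cc.φnorm τ) ^ r :=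
          Real.rpow_le_rpow hφστ.le (phnorm_append_le σ τ) hr.le
      _ = cc.φnorm σ ^ r * cc.φnorm τ ^ r := Real.mul_rpow hφσ.le hφτ.le
  calc aR cc μ r (σ ++ τ)
      ≤ (cc.eta h ^ 3 * (cc.xi ^ h) ^ 2 * ((μ (cc.Jc σ)).toReal * (μ (cc.Jc τ)).toReal))
        * (cc.φnorm σ ^ r * cc.φnorm τ ^ r) :=
        mul_le_mul hm hφ (Real.rpow_nonneg hφστ.le r)
          (mul_nonneg (mul_nonneg (pow_nonneg hη.le 3) (pow_nonneg (xi_rpow_pos (cc := cc) h).le 2))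
            (mul_nonneg ENNReal.toReal_nonneg ENNReal.toReal_nonneg))
    _ = cc.eta h ^ 3 * (cc.xi ^ h) ^ 2 * (aR cc μ r σ * aR cc μ r τ) := by
        rw [aR, aR]; ring
    _ ≤ K0c cc h r * (aR cc μ r σ * aR cc μ r τ) := by
        apply mul_le_mul_of_nonneg_right _ (mul_nonneg (aR_nonneg σ) (aR_nonneg τ))
        rw [K0c]
        have e2 : (cc.xi ^ h) ^ 2 ≤ (cc.xi ^ h) ^ 3 :=
          pow_le_pow_right₀ (one_le_xi_rpow hh0.le) (by norm_num)
        have e3 : (1:ℝ) ≤ (cc.xi ^ r) ^ 2 := one_le_pow₀ (one_le_xi_rpow hr.le)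
        calc cc.eta h ^ 3 * (cc.xi ^ h) ^ 2
            ≤ cc.eta h ^ 3 * (cc.xi ^ h) ^ 3 :=
              mul_le_mul_of_nonneg_left e2 (pow_nonneg hη.le 3)
          _ = cc.eta h ^ 3 * (cc.xi ^ h) ^ 3 * 1 := (mul_one _).symm
          _ ≤ cc.eta h ^ 3 * (cc.xi ^ h) ^ 3 * (cc.xi ^ r) ^ 2 :=
              mul_le_mul_of_nonneg_left e3
                (mul_nonneg (pow_nonneg hη.le 3) (pow_nonneg (xi_rpow_pos (cc := cc) h).le 3))

lemma aR_supermult (hμ : cc.IsGibbsLike μ h) (hh0 : 0 < h) (hr : 0 < r)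
    {σ τ : List (Fin cc.N)} (hσ : σ ≠ []) (hτ : τ ≠ []) :
    aR cc μ r σ * aR cc μ r τ ≤ K0c cc h r * aR cc μ r (σ ++ τ) := by
  have hφσ := phnorm_pos σ; have hφτ := phnorm_pos τ; have hφστ := phnorm_pos (σ ++ τ)
  have happ : σ ++ τ ≠ [] := fun hc => hσ (List.append_eq_nil_iff.1 hc).1
  have hη := eta_pos (cc := cc) (h := h)
  have hξ2 : (0:ℝ) < cc.xi ^ 2 := pow_pos xi_pos 2
  -- μσ μτ ≤ η³ (ξ^h)³ μ(στ)
  have hm : (μ (cc.Jc σ)).toReal * (μ (cc.Jc τ)).toReal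
      ≤ cc.eta h ^ 3 * (cc.xi ^ h) ^ 3 * (μ (cc.Jc (σ ++ τ))).toReal := by
    have s1 : (μ (cc.Jc σ)).toReal ≤ cc.eta h * cc.φnorm σ ^ h := gibbs_up hμ hh0 hσ
    have s2 : (μ (cc.Jc τ)).toReal ≤ cc.eta h * cc.φnorm τ ^ h := gibbs_up hμ hh0 hτ
    have s3 : cc.φnorm σ ^ h * cc.φnorm τ ^ h ≤ (cc.xi ^ h) ^ 2 * cc.φnorm (σ ++ τ) ^ h := by
      calc cc.φnorm σ ^ h * cc.φnorm τ ^ h = (cc.φnorm σ * cc.φnorm τ) ^ h :=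
            (Real.mul_rpow hφσ.le hφτ.le).symm
        _ ≤ (cc.xi ^ 2 * cc.φnorm (σ ++ τ)) ^ h :=
            Real.rpow_le_rpow (mul_nonneg hφσ.le hφτ.le) (phnorm_append_ge σ τ) hh0.le
        _ = (cc.xi ^ 2) ^ h * cc.φnorm (σ ++ τ) ^ h := Real.mul_rpow hξ2.le hφστ.le
        _ = (cc.xi ^ h) ^ 2 * cc.φnorm (σ ++ τ) ^ h := by rw [pow_rpow_comm xi_pos.le]
    have s4 : cc.φnorm (σ ++ τ) ^ h ≤ cc.xi ^ h * (cc.eta h * (μ (cc.Jc (σ ++ τ))).toReal) :=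
      phnorm_mul_rpow_le hμ hh0 happ
    calc (μ (cc.Jc σ)).toReal * (μ (cc.Jc τ)).toReal
        ≤ (cc.eta h * cc.φnorm σ ^ h) * (cc.eta h * cc.φnorm τ ^ h) :=
          mul_le_mul s1 s2 ENNReal.toReal_nonneg
            (mul_nonneg hη.le (Real.rpow_nonneg hφσ.le h))
      _ = cc.eta h ^ 2 * (cc.φnorm σ ^ h * cc.φnorm τ ^ h) := by ring
      _ ≤ cc.eta h ^ 2 * ((cc.xi ^ h) ^ 2 * cc.φnorm (σ ++ τ) ^ h) :=
          mul_le_mul_of_nonneg_left s3 (pow_nonneg hη.le 2)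
      _ ≤ cc.eta h ^ 2 * ((cc.xi ^ h) ^ 2 *
            (cc.xi ^ h * (cc.eta h * (μ (cc.Jc (σ ++ τ))).toReal))) := by
          apply mul_le_mul_of_nonneg_left _ (pow_nonneg hη.le 2)
          exact mul_le_mul_of_nonneg_left s4 (pow_nonneg (xi_rpow_pos (cc := cc) h).le 2)
      _ = cc.eta h ^ 3 * (cc.xi ^ h) ^ 3 * (μ (cc.Jc (σ ++ τ))).toReal := by ring
  -- φσ^r φτ^r ≤ (ξ^r)² φ(στ)^r
  have hφ : cc.φnorm σ ^ r * cc.φnorm τ ^ r ≤ (cc.xi ^ r) ^ 2 * cc.φnorm (σ ++ τ) ^ r := by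
    calc cc.φnorm σ ^ r * cc.φnorm τ ^ r = (cc.φnorm σ * cc.φnorm τ) ^ r :=
          (Real.mul_rpow hφσ.le hφτ.le).symm
      _ ≤ (cc.xi ^ 2 * cc.φnorm (σ ++ τ)) ^ r :=
          Real.rpow_le_rpow (mul_nonneg hφσ.le hφτ.le) (phnorm_append_ge σ τ) hr.le
      _ = (cc.xi ^ 2) ^ r * cc.φnorm (σ ++ τ) ^ r := Real.mul_rpow hξ2.le hφστ.le
      _ = (cc.xi ^ r) ^ 2 * cc.φnorm (σ ++ τ) ^ r := by rw [pow_rpow_comm xi_pos.le]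
  calc aR cc μ r σ * aR cc μ r τ
      = ((μ (cc.Jc σ)).toReal * (μ (cc.Jc τ)).toReal)
        * (cc.φnorm σ ^ r * cc.φnorm τ ^ r) := by rw [aR, aR]; ring
    _ ≤ (cc.eta h ^ 3 * (cc.xi ^ h) ^ 3 * (μ (cc.Jc (σ ++ τ))).toReal)
        * ((cc.xi ^ r) ^ 2 * cc.φnorm (σ ++ τ) ^ r) :=
        mul_le_mul hm hφ
          (mul_nonneg (Real.rpow_nonneg hφσ.le r) (Real.rpow_nonneg hφτ.le r))
          (mul_nonneg (mul_nonneg (pow_nonneg hη.le 3) (pow_nonneg (xi_rpow_pos (cc := cc) h).le 3))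
            ENNReal.toReal_nonneg)
    _ = K0c cc h r * aR cc μ r (σ ++ τ) := by rw [K0c, aR]; ring

end Gibbs

end Aux5
section Aux6

open CookieCutter Set Finset

variable {cc : CookieCutter}

/-- The finset of words of length `k`. -/
def ΛF (cc : CookieCutter) (k : ℕ) : Finset (List (Fin cc.N)) :=
  (Finset.univ : Finset (Fin k → Fin cc.N)).image List.ofFn

lemma mem_ΛF {k : ℕ} {σ : List (Fin cc.N)} : σ ∈ ΛF cc k ↔ σ.length = k := by
  constructor
  · intro hσ
    obtain ⟨v, _, rfl⟩ := Finset.mem_image.1 hσ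
    exact List.length_ofFn
  · intro hlen
    subst hlen
    exact Finset.mem_image.2 ⟨σ.get, Finset.mem_univ _, List.ofFn_get σ⟩

lemma sum_ΛF {k : ℕ} (g : List (Fin cc.N) → ℝ) :
    ∑ σ ∈ ΛF cc k, g σ = ∑ v : Fin k → Fin cc.N, g (List.ofFn v) :=
  Finset.sum_image (fun _ _ _ _ hab => List.ofFn_injective hab)

lemma sum_ΛF_add {k l : ℕ} (g : List (Fin cc.N) → ℝ) :
    ∑ υ ∈ ΛF cc (k + l), g υ = ∑ σ ∈ ΛF cc k, ∑ τ ∈ ΛF cc l, g (σ ++ τ) := by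
  rw [← Finset.sum_product']
  apply Finset.sum_nbij' (fun υ => (υ.take k, υ.drop k)) (fun p => p.1 ++ p.2)
  · intro υ hυ
    rw [mem_ΛF] at hυ
    refine Finset.mk_mem_product (mem_ΛF.2 ?_) (mem_ΛF.2 ?_)
    · rw [List.length_take]; omega
    · rw [List.length_drop]; omega
  · intro p hp
    rw [Finset.mem_product] at hp
    rw [mem_ΛF, List.length_append, mem_ΛF.1 hp.1, mem_ΛF.1 hp.2]
  · intro υ _; exact List.take_append_drop k υ
  · intro p hp
    rw [Finset.mem_product] at hp
    have h1 := mem_ΛF.1 hp.1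
    ext
    · rw [List.take_left' h1]
    · rw [List.drop_left' h1]
  · intro υ hυ
    rw [List.take_append_drop]

/-- Mixed-length antichain sums are dominated by the level-`m` sum. -/
lemma sum_antichain_le {m : ℕ} (Γ : Finset (List (Fin cc.N)))
    (hanti : ∀ σ ∈ Γ, ∀ τ ∈ Γ, σ <+: τ → σ = τ)
    (hlen : ∀ σ ∈ Γ, σ.length ≤ m)
    (g : List (Fin cc.N) → ℝ) (hg : ∀ υ, 0 ≤ g υ) :
    ∑ σ ∈ Γ, ∑ τ ∈ ΛF cc (m - σ.length), g (σ ++ τ) ≤ ∑ υ ∈ ΛF cc m, g υ := by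
  rw [← Finset.sum_sigma (Γ) (fun σ => ΛF cc (m - σ.length)) (fun x => g (x.1 ++ x.2))]
  set S := Γ.sigma (fun σ => ΛF cc (m - σ.length)) with hS
  have hinj : ∀ x ∈ S, ∀ y ∈ S, x.1 ++ x.2 = y.1 ++ y.2 → x = y := by
    rintro ⟨σ, τ⟩ hx ⟨σ', τ'⟩ hy hxy
    rw [Finset.mem_sigma] at hx hy
    have hpre : σ <+: σ' ∨ σ' <+: σ := by
      apply List.prefix_or_prefix_of_prefix (l₃ := σ ++ τ)
      · exact List.prefix_append σ τ
      · rw [hxy]; exact List.prefix_append σ' τ'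
    have hσσ : σ = σ' := by
      rcases hpre with hp | hp
      · exact hanti σ hx.1 σ' hy.1 hp
      · exact (hanti σ' hy.1 σ hx.1 hp).symm
    subst hσσ
    have : τ = τ' := List.append_cancel_left hxy
    subst this
    rfl
  rw [show (∑ x ∈ S, g (x.1 ++ x.2)) = ∑ υ ∈ S.image (fun x => x.1 ++ x.2), g υ from
    (Finset.sum_image hinj).symm]
  apply Finset.sum_le_sum_of_subset_of_nonneg
  · intro υ hυ
    obtain ⟨⟨σ, τ⟩, hx, rfl⟩ := Finset.mem_image.1 hυ
    rw [Finset.mem_sigma] at hx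
    have h2 : τ.length = m - σ.length := mem_ΛF.1 hx.2
    have h3 : σ ∈ Γ := hx.1
    have h4 := hlen σ h3
    show σ ++ τ ∈ ΛF cc m
    rw [mem_ΛF, List.length_append, h2]
    omega
  · intro υ _ _; exact hg υ

/-- Bounds on an almost-multiplicative sequence whose exponential growth rate is zero. -/
lemma T_bounds (T : ℕ → ℝ) (hT0 : ∀ k, 0 < T k) (K : ℝ) (hK : 1 ≤ K)
    (hsub : ∀ k l, 1 ≤ k → 1 ≤ l → T (k + l) ≤ K * (T k * T l))
    (hsup : ∀ k l, 1 ≤ k → 1 ≤ l → T k * T l ≤ K * T (k + l))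
    (hlim : Filter.Tendsto (fun k : ℕ => 1 / (k : ℝ) * Real.log (T k))
      Filter.atTop (nhds 0)) :
    ∀ k, 1 ≤ k → T k ≤ K ∧ K⁻¹ ≤ T k := by
  have hK0 : (0:ℝ) < K := lt_of_lt_of_le one_pos hK
  intro k hk
  have hup : ∀ m, 1 ≤ m → T (m * k) ≤ (K * T k) ^ m := by
    intro m hm
    induction m with
    | zero => omega
    | succ n ih =>
      rcases Nat.eq_or_lt_of_le hm with hm1 | hm1
      · simp only [← hm1]
        rw [one_mul, pow_one]
        nlinarith [hT0 k, hT0 (1 * k)]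
      · have hn : 1 ≤ n := by omega
        have ihn := ih hn
        calc T ((n+1) * k) = T (n * k + k) := by rw [Nat.succ_mul]
          _ ≤ K * (T (n * k) * T k) := hsub _ _ (Nat.mul_pos hn hk) hk
          _ ≤ K * ((K * T k) ^ n * T k) := by
              apply mul_le_mul_of_nonneg_left _ hK0.le
              exact mul_le_mul_of_nonneg_right ihn (hT0 k).le
          _ = (K * T k) ^ (n + 1) := by ring
  have hlow : ∀ m, 1 ≤ m → (K⁻¹ * T k) ^ m ≤ T (m * k) := by
    intro m hm
    induction m with
    | zero => omega
    | succ n ih =>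
      rcases Nat.eq_or_lt_of_le hm with hm1 | hm1
      · simp only [← hm1]
        rw [one_mul, pow_one, inv_mul_le_iff₀ hK0]
        nlinarith [hT0 k]
      · have hn : 1 ≤ n := by omega
        have ihn := ih hn
        have hstep : K⁻¹ * (T (n * k) * T k) ≤ T (n * k + k) := by
          rw [inv_mul_le_iff₀ hK0]
          exact hsup _ _ (Nat.mul_pos hn hk) hk
        calc (K⁻¹ * T k) ^ (n + 1) = K⁻¹ * ((K⁻¹ * T k) ^ n * T k) := by ring
          _ ≤ K⁻¹ * (T (n * k) * T k) := by
              apply mul_le_mul_of_nonneg_left _ (inv_nonneg.2 hK0.le)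
              exact mul_le_mul_of_nonneg_right ihn (hT0 k).le
          _ ≤ T (n * k + k) := hstep
          _ = T ((n+1) * k) := by rw [Nat.succ_mul]
  have hk0 : 0 < k := hk
  have hmk : Filter.Tendsto (fun m : ℕ => m * k) Filter.atTop Filter.atTop := by
    apply Filter.tendsto_atTop_atTop.2
    intro n
    exact ⟨n, fun a ha => le_trans ha (Nat.le_mul_of_pos_right a hk0)⟩
  have hcomp : Filter.Tendsto (fun m : ℕ => 1 / ((m * k : ℕ) : ℝ) * Real.log (T (m * k)))
      Filter.atTop (nhds 0) := hlim.comp hmk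
  have hTk0 := hT0 k
  constructor
  · -- T k ≤ K  from the lower bound
    have hle : ∀ᶠ m : ℕ in Filter.atTop,
        1 / (k : ℝ) * Real.log (K⁻¹ * T k) ≤ 1 / ((m * k : ℕ) : ℝ) * Real.log (T (m * k)) := by
      filter_upwards [Filter.eventually_ge_atTop 1] with m hm
      have hpos : (0:ℝ) < (m : ℝ) * (k : ℝ) := by
        have : (0:ℝ) < (m:ℝ) := by exact_mod_cast hm
        have : (0:ℝ) < (k:ℝ) := by exact_mod_cast hk0
        positivity
      have h1 : Real.log ((K⁻¹ * T k) ^ m) ≤ Real.log (T (m * k)) :=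
        Real.log_le_log (pow_pos (mul_pos (inv_pos.2 hK0) hTk0) m) (hlow m hm)
      rw [Real.log_pow] at h1
      rw [Nat.cast_mul]
      rw [div_mul_eq_mul_div, div_mul_eq_mul_div, one_mul, one_mul,
        div_le_div_iff₀ (by exact_mod_cast hk0) hpos]
      calc Real.log (K⁻¹ * T k) * ((m:ℝ) * (k:ℝ))
          = ((m:ℝ) * Real.log (K⁻¹ * T k)) * (k:ℝ) := by ring
        _ ≤ Real.log (T (m * k)) * (k:ℝ) := by
            apply mul_le_mul_of_nonneg_right _ (by exact_mod_cast hk0.le)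
            exact_mod_cast h1
    have h0 : 1 / (k : ℝ) * Real.log (K⁻¹ * T k) ≤ 0 := ge_of_tendsto hcomp hle
    have hkpos : (0:ℝ) < 1 / (k:ℝ) := by
      have : (0:ℝ) < (k:ℝ) := by exact_mod_cast hk0
      positivity
    have hlog : Real.log (K⁻¹ * T k) ≤ 0 := by
      by_contra hcon
      push_neg at hcon
      nlinarith
    have := (Real.log_nonpos_iff (mul_pos (inv_pos.2 hK0) hTk0).le).1 hlog
    rw [inv_mul_le_iff₀ hK0, mul_one] at this
    exact this
  · -- K⁻¹ ≤ T k  from the upper bound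
    have hle : ∀ᶠ m : ℕ in Filter.atTop,
        1 / ((m * k : ℕ) : ℝ) * Real.log (T (m * k)) ≤ 1 / (k : ℝ) * Real.log (K * T k) := by
      filter_upwards [Filter.eventually_ge_atTop 1] with m hm
      have hpos : (0:ℝ) < (m : ℝ) * (k : ℝ) := by
        have : (0:ℝ) < (m:ℝ) := by exact_mod_cast hm
        have : (0:ℝ) < (k:ℝ) := by exact_mod_cast hk0
        positivity
      have h1 : Real.log (T (m * k)) ≤ Real.log ((K * T k) ^ m) :=
        Real.log_le_log (hT0 _) (hup m hm)
      rw [Real.log_pow] at h1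
      rw [Nat.cast_mul]
      rw [div_mul_eq_mul_div, div_mul_eq_mul_div, one_mul, one_mul,
        div_le_div_iff₀ hpos (by exact_mod_cast hk0)]
      calc Real.log (T (m * k)) * (k:ℝ)
          ≤ ((m:ℝ) * Real.log (K * T k)) * (k:ℝ) := by
            apply mul_le_mul_of_nonneg_right _ (by exact_mod_cast hk0.le)
            exact_mod_cast h1
        _ = Real.log (K * T k) * ((m:ℝ) * (k:ℝ)) := by ring
    have h0 : 0 ≤ 1 / (k : ℝ) * Real.log (K * T k) := le_of_tendsto hcomp hle
    have hkpos : (0:ℝ) < 1 / (k:ℝ) := by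
      have : (0:ℝ) < (k:ℝ) := by exact_mod_cast hk0
      positivity
    have hlog : 0 ≤ Real.log (K * T k) := by
      by_contra hcon
      push_neg at hcon
      nlinarith
    have := (Real.log_nonneg_iff (mul_pos hK0 hTk0)).1 hlog
    rw [← inv_mul_le_iff₀ hK0, mul_one] at this
    exact this

end Aux6
section Aux7

open CookieCutter Set Finset MeasureTheory ENNReal

variable {cc : CookieCutter}

lemma phnorm_nil : cc.φnorm ([] : List (Fin cc.N)) = 1 := by
  have : (fun x => |deriv (cc.wordMap ([] : List (Fin cc.N))) x|) '' Set.Icc 0 1 = {1} := by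
    have he : cc.wordMap ([] : List (Fin cc.N)) = id := rfl
    rw [he]
    have : (fun x : ℝ => |deriv id x|) = fun _ : ℝ => (1:ℝ) := by
      funext x; rw [deriv_id x]; norm_num
    rw [this]
    exact Set.Nonempty.image_const (Set.nonempty_Icc.2 zero_le_one) 1
  rw [CookieCutter.φnorm, this, csSup_singleton]

lemma Jc_nil : cc.Jc ([] : List (Fin cc.N)) = Set.Icc 0 1 := by
  rw [CookieCutter.Jc]
  have he : cc.wordMap ([] : List (Fin cc.N)) = id := rfl
  rw [he, Set.image_id]

lemma Jc_append_subset (σ τ : List (Fin cc.N)) : cc.Jc (σ ++ τ) ⊆ cc.Jc σ := by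
  rw [CookieCutter.Jc, CookieCutter.Jc, wordMap_append]
  rintro z ⟨x, hx, rfl⟩
  exact ⟨cc.wordMap τ x, wordMap_mem_Icc τ hx, rfl⟩

lemma Jc_subset_of_prefix {σ τ : List (Fin cc.N)} (hpre : σ <+: τ) : cc.Jc τ ⊆ cc.Jc σ := by
  obtain ⟨t, rfl⟩ := hpre
  exact Jc_append_subset σ t

lemma E_subset_level {m : ℕ} (hm : 1 ≤ m) :
    cc.E ⊆ ⋃ v : Fin m → Fin cc.N, cc.Jc (List.ofFn v) := by
  intro x hx
  rw [CookieCutter.E] at hx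
  exact Set.mem_iInter.1 (Set.mem_iInter.1 hx m) hm

lemma E_subset_Icc : cc.E ⊆ Set.Icc 0 1 := by
  intro x hx
  obtain ⟨s, ⟨v, rfl⟩, hxs⟩ := E_subset_level le_rfl hx
  exact Jc_subset_Icc _ hxs

section Meas

variable {μ : MeasureTheory.Measure ℝ} {h r : ℝ}

lemma mu_E_one (hμ : cc.IsGibbsLike μ h) : μ cc.E = 1 := by
  haveI := hμ.1
  have h1 : μ cc.Eᶜ = 0 := hμ.2.1
  have h2 := measure_add_measure_compl (μ := μ) (s := cc.E) (by
    -- measurability of E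
    apply MeasurableSet.iInter
    intro n
    apply MeasurableSet.iInter
    intro _
    apply MeasurableSet.iUnion
    intro v
    exact measurableSet_Jc _)
  rw [h1, add_zero] at h2
  rw [h2, measure_univ]

lemma mu_Icc_one (hμ : cc.IsGibbsLike μ h) : (μ (Set.Icc (0:ℝ) 1)).toReal = 1 := by
  haveI := hμ.1
  have h1 : (1:ℝ≥0∞) = μ cc.E := (mu_E_one hμ).symm
  have h2 : μ cc.E ≤ μ (Set.Icc (0:ℝ) 1) := measure_mono E_subset_Icc
  have h3 : μ (Set.Icc (0:ℝ) 1) ≤ 1 := prob_le_one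
  have : μ (Set.Icc (0:ℝ) 1) = 1 := le_antisymm h3 (h1 ▸ h2)
  rw [this, ENNReal.toReal_one]

lemma aR_nil (hμ : cc.IsGibbsLike μ h) : aR cc μ r ([] : List (Fin cc.N)) = 1 := by
  rw [aR, Jc_nil, phnorm_nil, mu_Icc_one hμ, Real.one_rpow, mul_one]

lemma Vnr_nonneg (μ : MeasureTheory.Measure ℝ) (n : ℕ) (r : ℝ) : 0 ≤ Vnr μ n r := by
  apply Real.sInf_nonneg
  rintro x ⟨β, _, rfl⟩
  exact integral_nonneg fun y => Real.rpow_nonneg Metric.infDist_nonneg r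

lemma Vnr_le_sum (hμ : cc.IsGibbsLike μ h) (hr : 0 < r) {m : ℕ} (hm : 1 ≤ m)
    (Γ : Finset (List (Fin cc.N))) (hΓne : Γ.Nonempty)
    (hcover : ∀ τ ∈ ΛF cc m, ∃ σ ∈ Γ, σ <+: τ) {n : ℕ} (hn : Γ.card ≤ n) :
    Vnr μ n r ≤ ∑ σ ∈ Γ, (μ (cc.Jc σ)).toReal * cc.diamJ σ ^ r := by
  haveI := hμ.1
  classical
  set α : Finset ℝ := Γ.image (fun σ => cc.wordMap σ 0) with hα
  set F : ℝ → ℝ := fun x => Metric.infDist x (α : Set ℝ) ^ r with hF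
  set G : ℝ → ℝ := fun x => ∑ σ ∈ Γ, (cc.Jc σ).indicator (fun _ => cc.diamJ σ ^ r) x with hG
  have hFG : ∀ x ∈ cc.E, F x ≤ G x := by
    intro x hx
    obtain ⟨s, ⟨v, rfl⟩, hxs⟩ := E_subset_level hm hx
    obtain ⟨σ, hσΓ, hσpre⟩ := hcover (List.ofFn v) (mem_ΛF.2 List.length_ofFn)
    have hxσ : x ∈ cc.Jc σ := Jc_subset_of_prefix hσpre hxs
    have hptσ : cc.wordMap σ 0 ∈ cc.Jc σ := ⟨0, by norm_num, rfl⟩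
    have hptα : cc.wordMap σ 0 ∈ (α : Set ℝ) := by
      rw [hα]; exact Finset.mem_coe.2 (Finset.mem_image.2 ⟨σ, hσΓ, rfl⟩)
    have h1 : Metric.infDist x (α : Set ℝ) ≤ dist x (cc.wordMap σ 0) :=
      Metric.infDist_le_dist_of_mem hptα
    have h2 : dist x (cc.wordMap σ 0) ≤ cc.diamJ σ :=
      Metric.dist_le_diam_of_mem (isCompact_Jc σ).isBounded hxσ hptσ
    have h3 : F x ≤ cc.diamJ σ ^ r :=
      Real.rpow_le_rpow Metric.infDist_nonneg (h1.trans h2) hr.le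
    refine h3.trans ?_
    have h4 : (cc.Jc σ).indicator (fun _ => cc.diamJ σ ^ r) x = cc.diamJ σ ^ r :=
      Set.indicator_of_mem hxσ _
    rw [hG, ← h4]
    apply Finset.single_le_sum (f := fun σ => (cc.Jc σ).indicator (fun _ => cc.diamJ σ ^ r) x)
      _ hσΓ
    intro τ _
    exact Set.indicator_nonneg (fun _ _ => Real.rpow_nonneg (diam_nonneg τ) r) x
  have hGint : Integrable G μ :=
    integrable_finset_sum _ (fun σ _ => (integrable_const _).indicator (measurableSet_Jc σ))
  have hFcont : Continuous F := by
    rw [hF]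
    exact (Metric.continuous_infDist_pt (α : Set ℝ)).rpow_const (fun x => Or.inr hr.le)
  have hae : ∀ᵐ x ∂μ, F x ≤ G x := by
    rw [MeasureTheory.ae_iff]
    apply measure_mono_null _ hμ.2.1
    intro x hx
    simp only [Set.mem_setOf_eq] at hx
    simp only [Set.mem_compl_iff]
    intro hxE
    exact hx (hFG x hxE)
  have hFint : Integrable F μ := by
    apply hGint.mono' hFcont.aestronglyMeasurable
    filter_upwards [hae] with x hx
    rwa [Real.norm_eq_abs, abs_of_nonneg (Real.rpow_nonneg Metric.infDist_nonneg r)]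
  have hint : ∫ x, F x ∂μ ≤ ∫ x, G x ∂μ := integral_mono_ae hFint hGint hae
  have hGval : ∫ x, G x ∂μ = ∑ σ ∈ Γ, (μ (cc.Jc σ)).toReal * cc.diamJ σ ^ r := by
    rw [hG, integral_finset_sum _ (fun σ _ => (integrable_const _).indicator (measurableSet_Jc σ))]
    congr 1
    funext σ
    rw [MeasureTheory.integral_indicator_const _ (measurableSet_Jc σ), smul_eq_mul, MeasureTheory.measureReal_def]
  have hmem : Vnr μ n r ≤ ∫ x, F x ∂μ := by
    apply csInf_le
    · refine ⟨0, ?_⟩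
      rintro z ⟨β, _, rfl⟩
      exact integral_nonneg fun y => Real.rpow_nonneg Metric.infDist_nonneg r
    · refine ⟨α, ⟨hΓne.image _, le_trans (Finset.card_image_le) hn⟩, rfl⟩
  calc Vnr μ n r ≤ ∫ x, F x ∂μ := hmem
    _ ≤ ∫ x, G x ∂μ := hint
    _ = ∑ σ ∈ Γ, (μ (cc.Jc σ)).toReal * cc.diamJ σ ^ r := hGval

end Meas

end Aux7
section Aux8

open CookieCutter Set Finset MeasureTheory ENNReal

variable {cc : CookieCutter} {μ : MeasureTheory.Measure ℝ} {h r : ℝ}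

lemma gamma_exists (_hε0 : (0:ℝ) < ε) {m : ℕ} (hm : 1 ≤ m)
    (hsmall : ∀ τ : List (Fin cc.N), τ.length = m → aR cc μ r τ < ε) :
    ∃ Γ : Finset (List (Fin cc.N)),
      (∀ σ ∈ Γ, σ ≠ [] ∧ aR cc μ r σ < ε ∧ σ.length ≤ m ∧
        (∀ ρ : List (Fin cc.N), ρ ≠ [] → ρ <+: σ → ρ ≠ σ → ε ≤ aR cc μ r ρ)) ∧
      (∀ σ ∈ Γ, ∀ τ ∈ Γ, σ <+: τ → σ = τ) ∧
      (∀ τ ∈ ΛF cc m, ∃ σ ∈ Γ, σ <+: τ) ∧ Γ.Nonempty := by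
  classical
  set P : List (Fin cc.N) → Prop := fun σ => σ ≠ [] ∧ aR cc μ r σ < ε ∧
    (∀ ρ : List (Fin cc.N), ρ ≠ [] → ρ <+: σ → ρ ≠ σ → ε ≤ aR cc μ r ρ) with hP
  set Γ : Finset (List (Fin cc.N)) :=
    ((Finset.range (m+1)).biUnion (fun l => ΛF cc l)).filter P with hΓ
  have hmem : ∀ σ : List (Fin cc.N), σ ∈ Γ ↔ (σ.length ≤ m ∧ P σ) := by
    intro σ
    rw [hΓ, Finset.mem_filter, Finset.mem_biUnion]
    constructor
    · rintro ⟨⟨l, hl, hσl⟩, hPσ⟩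
      rw [Finset.mem_range] at hl
      rw [mem_ΛF] at hσl
      exact ⟨by omega, hPσ⟩
    · rintro ⟨hlen, hPσ⟩
      exact ⟨⟨σ.length, Finset.mem_range.2 (by omega), mem_ΛF.2 rfl⟩, hPσ⟩
  have hcov : ∀ τ : List (Fin cc.N), τ ≠ [] → τ.length ≤ m → aR cc μ r τ < ε →
      ∃ σ ∈ Γ, σ <+: τ := by
    have key : ∀ n : ℕ, ∀ τ : List (Fin cc.N), τ.length = n → τ ≠ [] → τ.length ≤ m →
        aR cc μ r τ < ε → ∃ σ ∈ Γ, σ <+: τ := by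
      intro n
      induction n using Nat.strong_induction_on with
      | _ n ih =>
        intro τ hτn hτne hτm hτε
        by_cases hall : ∀ ρ : List (Fin cc.N), ρ ≠ [] → ρ <+: τ → ρ ≠ τ → ε ≤ aR cc μ r ρ
        · exact ⟨τ, (hmem τ).2 ⟨hτm, hτne, hτε, hall⟩, List.prefix_refl τ⟩
        · push_neg at hall
          obtain ⟨ρ, hρne, hρpre, hρneτ, hρε⟩ := hall
          have hlt : ρ.length < τ.length :=
            lt_of_le_of_ne hρpre.length_le (fun hl => hρneτ (hρpre.eq_of_length hl))
          obtain ⟨σ, hσΓ, hσpre⟩ :=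
            ih ρ.length (hτn ▸ hlt) ρ rfl hρne (le_trans hlt.le hτm) hρε
          exact ⟨σ, hσΓ, hσpre.trans hρpre⟩
    intro τ; exact key τ.length τ rfl
  have hΓcov : ∀ τ ∈ ΛF cc m, ∃ σ ∈ Γ, σ <+: τ := by
    intro τ hτ
    have hlen := mem_ΛF.1 hτ
    have hτne : τ ≠ [] := by
      intro hc; rw [hc] at hlen; simp at hlen; omega
    exact hcov τ hτne (le_of_eq hlen) (hsmall τ hlen)
  refine ⟨Γ, ?_, ?_, hΓcov, ?_⟩
  · intro σ hσ
    obtain ⟨hlen, hne, hlt, hmin⟩ := (hmem σ).1 hσ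
    exact ⟨hne, hlt, hlen, hmin⟩
  · intro σ hσ τ hτ hpre
    by_contra hne
    obtain ⟨hlenτ, hτne, hτε, hτmin⟩ := (hmem τ).1 hτ
    obtain ⟨hlenσ, hσne, hσε, _⟩ := (hmem σ).1 hσ
    exact absurd hσε (not_lt.2 (hτmin σ hσne hpre hne))
  · have j0 : Fin cc.N := ⟨0, by have := cc.hN; omega⟩
    obtain ⟨σ, hσΓ, _⟩ := hΓcov (List.replicate m j0) (mem_ΛF.2 List.length_replicate)
    exact ⟨σ, hσΓ⟩

end Aux8
theorem upper_quantization_coefficient_finite (cc : CookieCutter) (Q : ℝ → ℝ)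
    (hQ : ∀ t : ℝ, Filter.Tendsto
      (fun k : ℕ => (1 / (k : ℝ)) * Real.log
        (∑ σ : Fin k → Fin cc.N, cc.φnorm (List.ofFn σ) ^ t))
      Filter.atTop (nhds (Q t)))
    (h : ℝ) (hh0 : 0 < h) (hQh : Q h = 0)
    (μ : MeasureTheory.Measure ℝ) (hμ : cc.IsGibbsLike μ h) (r : ℝ) (hr : 0 < r)
    (κ : ℝ) (hκ : 0 < κ)
    (hκlim : Filter.Tendsto
      (fun n : ℕ => (1 / (n : ℝ)) * Real.log
        (∑ σ : Fin n → Fin cc.N,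
          ((μ (cc.Jc (List.ofFn σ))).toReal * cc.φnorm (List.ofFn σ) ^ r) ^ (κ / (r + κ))))
      Filter.atTop (nhds 0)) :
    ∃ C : ℝ, ∀ᶠ n : ℕ in Filter.atTop, (n : ℝ) * Vnr μ n r ^ (κ / r) ≤ C := by
  classical
  clear hQ hQh Q
  set s : ℝ := κ / (r + κ) with hs
  have hrκ : 0 < r + κ := by linarith
  have hs0 : 0 < s := div_pos hκ hrκ
  set K0 : ℝ := K0c cc h r with hK0def
  have hK01 : 1 ≤ K0 := one_le_K0 hh0 hr
  have hK00 : 0 < K0 := K0_pos hh0 hr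
  set Ks : ℝ := K0 ^ s with hKsdef
  have hKs1 : 1 ≤ Ks := by
    rw [hKsdef]
    calc (1:ℝ) = 1 ^ s := (Real.one_rpow s).symm
      _ ≤ K0 ^ s := Real.rpow_le_rpow zero_le_one hK01 hs0.le
  have hKs0 : 0 < Ks := lt_of_lt_of_le one_pos hKs1
  set bb : List (Fin cc.N) → ℝ := fun σ => aR cc μ r σ ^ s with hbb
  have haR_pos' : ∀ σ : List (Fin cc.N), 0 < aR cc μ r σ := by
    intro σ
    rcases eq_or_ne σ [] with rfl | hne
    · rw [aR_nil hμ]; norm_num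
    · exact aR_pos hμ hh0 hne
  have hbb_pos : ∀ σ, 0 < bb σ := fun σ => Real.rpow_pos_of_pos (haR_pos' σ) s
  have hbb_nonneg : ∀ σ, 0 ≤ bb σ := fun σ => (hbb_pos σ).le
  have hbb_sub : ∀ σ τ : List (Fin cc.N), σ ≠ [] → τ ≠ [] →
      bb (σ ++ τ) ≤ Ks * (bb σ * bb τ) := by
    intro σ τ hσ hτ
    have h2 : aR cc μ r (σ ++ τ) ^ s ≤ (K0 * (aR cc μ r σ * aR cc μ r τ)) ^ s :=
      Real.rpow_le_rpow (aR_nonneg _) (aR_submult hμ hh0 hr hσ hτ) hs0.le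
    calc bb (σ ++ τ) ≤ (K0 * (aR cc μ r σ * aR cc μ r τ)) ^ s := h2
      _ = K0 ^ s * ((aR cc μ r σ * aR cc μ r τ) ^ s) :=
          Real.mul_rpow hK00.le (mul_nonneg (aR_nonneg _) (aR_nonneg _))
      _ = Ks * (bb σ * bb τ) := by rw [Real.mul_rpow (aR_nonneg σ) (aR_nonneg τ), hKsdef]
  have hbb_sup : ∀ σ τ : List (Fin cc.N), σ ≠ [] → τ ≠ [] →
      bb σ * bb τ ≤ Ks * bb (σ ++ τ) := by
    intro σ τ hσ hτ
    have h2 : (aR cc μ r σ * aR cc μ r τ) ^ s ≤ (K0 * aR cc μ r (σ ++ τ)) ^ s :=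
      Real.rpow_le_rpow (mul_nonneg (aR_nonneg _) (aR_nonneg _))
        (aR_supermult hμ hh0 hr hσ hτ) hs0.le
    calc bb σ * bb τ = (aR cc μ r σ * aR cc μ r τ) ^ s :=
          (Real.mul_rpow (aR_nonneg σ) (aR_nonneg τ)).symm
      _ ≤ (K0 * aR cc μ r (σ ++ τ)) ^ s := h2
      _ = Ks * bb (σ ++ τ) := by rw [Real.mul_rpow hK00.le (aR_nonneg _), hKsdef]
  have hbb_nil : bb ([] : List (Fin cc.N)) = 1 := by
    rw [hbb]; simp only; rw [aR_nil hμ, Real.one_rpow]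
  have hbb_sup' : ∀ σ τ : List (Fin cc.N), σ ≠ [] → bb σ * bb τ ≤ Ks * bb (σ ++ τ) := by
    intro σ τ hσ
    rcases eq_or_ne τ [] with rfl | hτ
    · rw [hbb_nil, List.append_nil, mul_one]
      nlinarith [hbb_pos σ]
    · exact hbb_sup σ τ hσ hτ
  set T : ℕ → ℝ := fun k => ∑ σ ∈ ΛF cc k, bb σ with hTdef
  have hTl : ∀ l, T l = ∑ τ ∈ ΛF cc l, bb τ := fun l => by rw [hTdef]
  have hTf : ∀ k, T k = ∑ v : Fin k → Fin cc.N, bb (List.ofFn v) := by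
    intro k; rw [hTl k]; exact sum_ΛF bb
  have hΛne : ∀ k, (ΛF cc k).Nonempty := by
    intro k
    have j0 : Fin cc.N := ⟨0, by have := cc.hN; omega⟩
    exact ⟨List.replicate k j0, mem_ΛF.2 List.length_replicate⟩
  have hT0 : ∀ k, 0 < T k := by
    intro k
    rw [hTl k]
    exact Finset.sum_pos (fun σ _ => hbb_pos σ) (hΛne k)
  have hT00 : T 0 = 1 := by
    rw [hTl 0]
    have he : ΛF cc 0 = {([] : List (Fin cc.N))} := by
      ext σ; rw [mem_ΛF, List.length_eq_zero_iff, Finset.mem_singleton]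
    rw [he, Finset.sum_singleton, hbb_nil]
  have hne_of_mem : ∀ {k : ℕ} {σ : List (Fin cc.N)}, 1 ≤ k → σ ∈ ΛF cc k → σ ≠ [] := by
    intro k σ hk hσ
    have hl := mem_ΛF.1 hσ
    intro hc; rw [hc] at hl; simp at hl; omega
  have hsum_eq : ∀ k l : ℕ, ∑ σ ∈ ΛF cc k, ∑ τ ∈ ΛF cc l, Ks * (bb σ * bb τ)
      = Ks * (T k * T l) := by
    intro k l
    rw [hTl k, hTl l, Finset.sum_mul_sum, Finset.mul_sum]
    apply Finset.sum_congr rfl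
    intro σ _
    rw [Finset.mul_sum]
  have hTsub : ∀ k l, 1 ≤ k → 1 ≤ l → T (k + l) ≤ Ks * (T k * T l) := by
    intro k l hk hl
    rw [hTl (k+l), sum_ΛF_add bb, ← hsum_eq k l]
    apply Finset.sum_le_sum
    intro σ hσ
    apply Finset.sum_le_sum
    intro τ hτ
    exact hbb_sub σ τ (hne_of_mem hk hσ) (hne_of_mem hl hτ)
  have hTsup : ∀ k l, 1 ≤ k → 1 ≤ l → T k * T l ≤ Ks * T (k + l) := by
    intro k l hk hl
    rw [hTl k, hTl l, Finset.sum_mul_sum, hTl (k+l), sum_ΛF_add bb, Finset.mul_sum]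
    apply Finset.sum_le_sum
    intro σ hσ
    rw [Finset.mul_sum]
    apply Finset.sum_le_sum
    intro τ hτ
    exact hbb_sup σ τ (hne_of_mem hk hσ) (hne_of_mem hl hτ)
  have hlim' : Filter.Tendsto (fun k : ℕ => 1 / (k:ℝ) * Real.log (T k))
      Filter.atTop (nhds 0) := by
    have he : (fun k : ℕ => 1 / (k:ℝ) * Real.log (T k))
        = fun k : ℕ => (1 / (k : ℝ)) * Real.log
          (∑ σ : Fin k → Fin cc.N,
            ((μ (cc.Jc (List.ofFn σ))).toReal * cc.φnorm (List.ofFn σ) ^ r) ^ s) := by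
      funext k
      rw [hTf k]
      simp only [hbb, aR]
    rw [he]
    exact hκlim
  have hTb := T_bounds T hT0 Ks hKs1 hTsub hTsup hlim'
  have hTub : ∀ k, T k ≤ Ks := by
    intro k; rcases Nat.eq_zero_or_pos k with rfl | hk
    · rw [hT00]; exact hKs1
    · exact (hTb k hk).1
  have hTlb : ∀ k, Ks⁻¹ ≤ T k := by
    intro k; rcases Nat.eq_zero_or_pos k with rfl | hk
    · rw [hT00]; exact inv_le_one_of_one_le₀ hKs1
    · exact (hTb k hk).2
  haveI hNe : Nonempty (Fin cc.N) := ⟨⟨0, by have := cc.hN; omega⟩⟩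
  set δ0 : ℝ := Finset.univ.inf' Finset.univ_nonempty (fun j : Fin cc.N => aR cc μ r [j])
    with hδ0def
  have hδ0pos : 0 < δ0 := by
    rw [hδ0def, Finset.lt_inf'_iff]
    intro j _
    exact haR_pos' [j]
  have hδ0le : ∀ j : Fin cc.N, δ0 ≤ aR cc μ r [j] :=
    fun j => Finset.inf'_le _ (Finset.mem_univ j)
  set c2 : ℝ := K0⁻¹ * δ0 with hc2def
  have hc2pos : 0 < c2 := mul_pos (inv_pos.2 hK00) hδ0pos
  set Cb : ℝ := max (Ks ^ 3 / c2 ^ s) 1 with hCbdef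
  have hCb1 : (1:ℝ) ≤ Cb := le_max_right _ _
  have hCb0 : (0:ℝ) < Cb := lt_of_lt_of_le one_pos hCb1
  have hCbK : Ks ^ 3 / c2 ^ s ≤ Cb := le_max_left _ _
  refine ⟨Cb ^ ((r + κ) / r), ?_⟩
  rw [Filter.eventually_atTop]
  refine ⟨max 1 ⌈Cb⌉₊, ?_⟩
  intro n hn
  have hn1 : 1 ≤ n := le_trans (le_max_left _ _) hn
  have hnCb : Cb ≤ (n : ℝ) := Nat.ceil_le.1 (le_trans (le_max_right _ _) hn)
  have hn0 : (0:ℝ) < n := lt_of_lt_of_le hCb0 hnCb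
  set ε : ℝ := (Cb / n) ^ (1/s) with hεdef
  have hCbn0 : 0 < Cb / n := div_pos hCb0 hn0
  have hε0 : 0 < ε := Real.rpow_pos_of_pos hCbn0 _
  have hε1 : ε ≤ 1 :=
    Real.rpow_le_one hCbn0.le (div_le_one_of_le₀ hnCb hn0.le) (one_div_nonneg.2 hs0.le)
  have hεs : ε ^ s = Cb / n := by
    rw [hεdef, ← Real.rpow_mul hCbn0.le, one_div, inv_mul_cancel₀ (ne_of_gt hs0),
      Real.rpow_one]
  set θ : ℝ := ((cc.b)⁻¹) ^ r with hθdef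
  have hθ0 : 0 ≤ θ := Real.rpow_nonneg (inv_nonneg.2 b_pos.le) r
  have hθ1 : θ < 1 :=
    Real.rpow_lt_one (inv_nonneg.2 b_pos.le) (inv_lt_one_of_one_lt₀ cc.hb1) hr
  obtain ⟨m0, hm0⟩ := exists_pow_lt_of_lt_one hε0 hθ1
  set m : ℕ := max m0 1 with hmdef
  have hm1 : 1 ≤ m := le_max_right _ _
  have hsmall : ∀ τ : List (Fin cc.N), τ.length = m → aR cc μ r τ < ε := by
    intro τ hτ
    have h1 : aR cc μ r τ ≤ ((cc.b)⁻¹ ^ m) ^ r := hτ ▸ aR_le hμ hr τ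
    have h2 : ((cc.b)⁻¹ ^ m) ^ r = θ ^ m := by
      rw [hθdef]; exact pow_rpow_comm (inv_nonneg.2 b_pos.le) m r
    calc aR cc μ r τ ≤ θ ^ m := by rw [← h2]; exact h1
      _ ≤ θ ^ m0 := pow_le_pow_of_le_one hθ0 hθ1.le (le_max_left _ _)
      _ < ε := hm0
  obtain ⟨Γ, hΓprop, hΓanti, hΓcov, hΓne⟩ := gamma_exists hε0 hm1 hsmall
  have hΓlow : ∀ σ ∈ Γ, c2 * ε ≤ aR cc μ r σ := by
    intro σ hσ
    obtain ⟨hσne, hσε, hσm, hσmin⟩ := hΓprop σ hσ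
    have hσlen : 1 ≤ σ.length := List.length_pos_iff.2 hσne
    rcases eq_or_lt_of_le hσlen with h1 | h2
    · obtain ⟨j, rfl⟩ := List.length_eq_one_iff.1 h1.symm
      have hK0inv : K0⁻¹ ≤ 1 := inv_le_one_of_one_le₀ hK01
      have hle : c2 * ε ≤ δ0 := by
        calc c2 * ε = K0⁻¹ * δ0 * ε := by rw [hc2def]
          _ ≤ 1 * δ0 * 1 :=
              mul_le_mul (mul_le_mul_of_nonneg_right hK0inv hδ0pos.le) hε1 hε0.le
                (by rw [one_mul]; exact hδ0pos.le)
          _ = δ0 := by ring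
      exact hle.trans (hδ0le j)
    · have hσne' : σ.dropLast ≠ [] := by
        have hdl := (List.length_dropLast : σ.dropLast.length = σ.length - 1)
        intro hc
        rw [hc] at hdl
        simp at hdl
        omega
      have heq : σ.dropLast ++ [σ.getLast hσne] = σ := List.dropLast_append_getLast hσne
      have hpre : σ.dropLast <+: σ := ⟨[σ.getLast hσne], heq⟩
      have hnee : σ.dropLast ≠ σ := by
        intro hc
        have h3 := (List.length_dropLast : σ.dropLast.length = σ.length - 1)
        rw [hc] at h3
        omega
      have hερ : ε ≤ aR cc μ r σ.dropLast := hσmin σ.dropLast hσne' hpre hnee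
      have hsup := aR_supermult hμ hh0 hr hσne'
        (by simp : ([σ.getLast hσne] : List (Fin cc.N)) ≠ [])
      rw [heq] at hsup
      have hmid : ε * δ0 ≤ K0 * aR cc μ r σ := by
        calc ε * δ0 ≤ aR cc μ r σ.dropLast * aR cc μ r [σ.getLast hσne] :=
              mul_le_mul hερ (hδ0le (σ.getLast hσne)) hδ0pos.le (aR_nonneg _)
          _ ≤ K0 * aR cc μ r σ := hsup
      calc c2 * ε = K0⁻¹ * (ε * δ0) := by rw [hc2def]; ring
        _ ≤ K0⁻¹ * (K0 * aR cc μ r σ) :=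
            mul_le_mul_of_nonneg_left hmid (inv_nonneg.2 hK00.le)
        _ = aR cc μ r σ := by
            rw [← mul_assoc, inv_mul_cancel₀ (ne_of_gt hK00), one_mul]
  have hlenΓ : ∀ σ ∈ Γ, σ.length ≤ m := fun σ hσ => (hΓprop σ hσ).2.2.1
  have hstep : ∀ σ ∈ Γ, bb σ ≤ Ks ^ 2 * ∑ τ ∈ ΛF cc (m - σ.length), bb (σ ++ τ) := by
    intro σ hσ
    have hA : bb σ * T (m - σ.length) ≤ Ks * ∑ τ ∈ ΛF cc (m - σ.length), bb (σ ++ τ) := by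
      rw [hTl (m - σ.length)]
      calc bb σ * ∑ τ ∈ ΛF cc (m - σ.length), bb τ
          = ∑ τ ∈ ΛF cc (m - σ.length), bb σ * bb τ := Finset.mul_sum _ _ _
        _ ≤ ∑ τ ∈ ΛF cc (m - σ.length), Ks * bb (σ ++ τ) :=
            Finset.sum_le_sum (fun τ _ => hbb_sup' σ τ (hΓprop σ hσ).1)
        _ = Ks * ∑ τ ∈ ΛF cc (m - σ.length), bb (σ ++ τ) := (Finset.mul_sum _ _ _).symm
    have hTlpos := hT0 (m - σ.length)
    have hTlinv : (T (m - σ.length))⁻¹ ≤ Ks := by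
      calc (T (m - σ.length))⁻¹ ≤ (Ks⁻¹)⁻¹ := inv_anti₀ (inv_pos.2 hKs0) (hTlb _)
        _ = Ks := inv_inv Ks
    have hX0 : 0 ≤ Ks * ∑ τ ∈ ΛF cc (m - σ.length), bb (σ ++ τ) :=
      mul_nonneg hKs0.le (Finset.sum_nonneg fun τ _ => hbb_nonneg _)
    calc bb σ ≤ (Ks * ∑ τ ∈ ΛF cc (m - σ.length), bb (σ ++ τ)) / T (m - σ.length) :=
          (le_div_iff₀ hTlpos).2 hA
      _ = (Ks * ∑ τ ∈ ΛF cc (m - σ.length), bb (σ ++ τ)) * (T (m - σ.length))⁻¹ :=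
          div_eq_mul_inv _ _
      _ ≤ (Ks * ∑ τ ∈ ΛF cc (m - σ.length), bb (σ ++ τ)) * Ks :=
          mul_le_mul_of_nonneg_left hTlinv hX0
      _ = Ks ^ 2 * ∑ τ ∈ ΛF cc (m - σ.length), bb (σ ++ τ) := by ring
  have hsumΓ : ∑ σ ∈ Γ, bb σ ≤ Ks ^ 3 := by
    calc ∑ σ ∈ Γ, bb σ
        ≤ ∑ σ ∈ Γ, Ks ^ 2 * ∑ τ ∈ ΛF cc (m - σ.length), bb (σ ++ τ) :=
          Finset.sum_le_sum hstep
      _ = Ks ^ 2 * ∑ σ ∈ Γ, ∑ τ ∈ ΛF cc (m - σ.length), bb (σ ++ τ) :=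
          (Finset.mul_sum _ _ _).symm
      _ ≤ Ks ^ 2 * ∑ υ ∈ ΛF cc m, bb υ := by
          apply mul_le_mul_of_nonneg_left _ (pow_nonneg hKs0.le 2)
          exact sum_antichain_le Γ hΓanti hlenΓ bb hbb_nonneg
      _ = Ks ^ 2 * T m := by rw [hTl m]
      _ ≤ Ks ^ 2 * Ks := mul_le_mul_of_nonneg_left (hTub m) (pow_nonneg hKs0.le 2)
      _ = Ks ^ 3 := by ring
  have hbbΓ : ∀ σ ∈ Γ, (c2 * ε) ^ s ≤ bb σ := fun σ hσ =>
    Real.rpow_le_rpow (mul_nonneg hc2pos.le hε0.le) (hΓlow σ hσ) hs0.le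
  have hcard : (Γ.card : ℝ) * (c2 * ε) ^ s ≤ Ks ^ 3 := by
    calc (Γ.card : ℝ) * (c2 * ε) ^ s = Γ.card • ((c2 * ε) ^ s) := by rw [nsmul_eq_mul]
      _ ≤ ∑ σ ∈ Γ, bb σ := Finset.card_nsmul_le_sum Γ bb _ hbbΓ
      _ ≤ Ks ^ 3 := hsumΓ
  have hc2s : 0 < c2 ^ s := Real.rpow_pos_of_pos hc2pos s
  have hcardn : (Γ.card : ℝ) ≤ n := by
    rw [Real.mul_rpow hc2pos.le hε0.le, hεs] at hcard
    have h1 : (Γ.card : ℝ) ≤ Ks ^ 3 / (c2 ^ s * (Cb / n)) :=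
      (le_div_iff₀ (mul_pos hc2s hCbn0)).2 hcard
    have h2 : Ks ^ 3 / (c2 ^ s * (Cb / n)) = (Ks ^ 3 / c2 ^ s) * ((n:ℝ) / Cb) := by
      field_simp
    have h3 : (Ks ^ 3 / c2 ^ s) * ((n:ℝ) / Cb) ≤ Cb * ((n:ℝ) / Cb) :=
      mul_le_mul_of_nonneg_right hCbK (div_nonneg hn0.le hCb0.le)
    have h4 : Cb * ((n:ℝ) / Cb) = n := by field_simp
    calc (Γ.card:ℝ) ≤ Ks ^ 3 / (c2 ^ s * (Cb / n)) := h1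
      _ = (Ks ^ 3 / c2 ^ s) * ((n:ℝ) / Cb) := h2
      _ ≤ Cb * ((n:ℝ) / Cb) := h3
      _ = n := h4
  have hVle : Vnr μ n r ≤ (n : ℝ) * ε := by
    have hcard' : Γ.card ≤ n := by exact_mod_cast hcardn
    have h1 := Vnr_le_sum hμ hr hm1 Γ hΓne hΓcov hcard'
    have h2 : ∑ σ ∈ Γ, (μ (cc.Jc σ)).toReal * cc.diamJ σ ^ r ≤ ∑ σ ∈ Γ, aR cc μ r σ := by
      apply Finset.sum_le_sum
      intro σ _
      simp only [aR]
      exact mul_le_mul_of_nonneg_left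
        (Real.rpow_le_rpow (diam_nonneg σ) (diam_le_phnorm σ) hr.le) ENNReal.toReal_nonneg
    have h3 : ∑ σ ∈ Γ, aR cc μ r σ ≤ ∑ σ ∈ Γ, ε :=
      Finset.sum_le_sum (fun σ hσ => ((hΓprop σ hσ).2.1).le)
    have h4 : ∑ _σ ∈ Γ, (ε:ℝ) = Γ.card * ε := by rw [Finset.sum_const, nsmul_eq_mul]
    calc Vnr μ n r ≤ ∑ σ ∈ Γ, (μ (cc.Jc σ)).toReal * cc.diamJ σ ^ r := h1
      _ ≤ ∑ σ ∈ Γ, aR cc μ r σ := h2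
      _ ≤ Γ.card * ε := h3.trans_eq h4
      _ ≤ n * ε := mul_le_mul_of_nonneg_right hcardn hε0.le
  have hVnn := Vnr_nonneg μ n r
  have ht : (0:ℝ) < κ / r := div_pos hκ hr
  have hfin1 : Vnr μ n r ^ (κ / r) ≤ ((n:ℝ) * ε) ^ (κ / r) :=
    Real.rpow_le_rpow hVnn hVle ht.le
  have hut : (1/s) * (κ/r) = (r+κ)/r := by
    rw [hs, one_div_div]
    field_simp
  have h1t : 1 + κ/r = (r+κ)/r := by field_simp
  have hfin2 : (n:ℝ) * ((n:ℝ) * ε) ^ (κ / r) = Cb ^ ((r + κ)/r) := by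
    have e1 : ((n:ℝ) * ε) ^ (κ/r) = (n:ℝ)^(κ/r) * ε ^ (κ/r) := Real.mul_rpow hn0.le hε0.le
    have e2 : ε ^ (κ/r) = (Cb/(n:ℝ)) ^ ((1/s) * (κ/r)) := by
      rw [hεdef, ← Real.rpow_mul hCbn0.le]
    have e3 : (Cb/(n:ℝ)) ^ ((r+κ)/r) = Cb ^ ((r+κ)/r) / (n:ℝ) ^ ((r+κ)/r) :=
      Real.div_rpow hCb0.le hn0.le _
    rw [e1, e2, hut, e3]
    have e5 : (n:ℝ) * (n:ℝ)^(κ/r) = (n:ℝ) ^ ((r+κ)/r) := by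
      rw [← h1t, Real.rpow_add hn0, Real.rpow_one]
    have hnr0 : (n:ℝ) ^ ((r+κ)/r) ≠ 0 := ne_of_gt (Real.rpow_pos_of_pos hn0 _)
    calc (n:ℝ) * ((n:ℝ)^(κ/r) * (Cb ^ ((r+κ)/r) / (n:ℝ) ^ ((r+κ)/r)))
        = ((n:ℝ) * (n:ℝ)^(κ/r)) * Cb ^ ((r+κ)/r) / (n:ℝ) ^ ((r+κ)/r) := by ring
      _ = (n:ℝ) ^ ((r+κ)/r) * Cb ^ ((r+κ)/r) / (n:ℝ) ^ ((r+κ)/r) := by rw [e5]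
      _ = Cb ^ ((r+κ)/r) := by
          rw [mul_comm, mul_div_assoc, div_self hnr0, mul_one]
  calc (n:ℝ) * Vnr μ n r ^ (κ/r) ≤ (n:ℝ) * ((n:ℝ)*ε) ^ (κ/r) :=
        mul_le_mul_of_nonneg_left hfin1 hn0.le
    _ = Cb ^ ((r+κ)/r) := hfin2
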